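/- arXiv:1410.5334 — 2 statements merged into one kernel-verified Lean document; each statement's English description precedes it below -/
import Mathlib

section
/- Let μ be a centred probability measure on ℝ with no atoms, and let F : ℝ × ℝ → ℝ be continuous, serrated with ridge a : ℝ → ℝ ∪ {−∞,+∞}, with a continuous partial derivative F_s(w,s) = ∂F/∂s(w,s) such that for each s₀ > 0 the function w ↦ F_s(w, s₀)/(s₀ − w) is strictly increasing on (−∞, s₀). Define g(w) = min(β_μ(w), max(a(w), 0, w)) and assume w ↦ F(w, g(w)) is μ-integrable. Then for every Rogers-admissible probability measure π with marginal μ such that F is π-integrable, one has ∫ F dπ ≤ ∫ F(w, g(w)) dμ(w). -/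
open MeasureTheory Set

noncomputable section

/-- The set `M = {(x,y) : y ≥ 0 and y ≥ x}`. -/
def MSet : Set (ℝ × ℝ) := {p : ℝ × ℝ | 0 ≤ p.2 ∧ p.1 ≤ p.2}

/-- A probability measure on `ℝ` is centred if the identity is integrable with mean `0`. -/
def Centred (μ : Measure ℝ) : Prop :=
  Integrable (fun x : ℝ => x) μ ∧ (∫ x, x ∂μ) = 0

/-- Strict supermodularity of a bivariate function. -/
def StrictlySupermodular (F : ℝ × ℝ → ℝ) : Prop :=
  ∀ w₁ w₂ s₁ s₂ : ℝ, w₁ < w₂ → s₁ < s₂ →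
    F (w₁, s₂) + F (w₂, s₁) < F (w₁, s₁) + F (w₂, s₂)

/-- `F` is serrated with ridge `a : ℝ → EReal`: for every `w`, `s ↦ F (w, s)` is
strictly increasing on `{s | s < a w}` and strictly decreasing on `{s | a w < s}`. -/
def SerratedWithRidge (F : ℝ × ℝ → ℝ) (a : ℝ → EReal) : Prop :=
  ∀ w : ℝ,
    StrictMonoOn (fun s : ℝ => F (w, s)) {s : ℝ | (s : EReal) < a w} ∧
    StrictAntiOn (fun s : ℝ => F (w, s)) {s : ℝ | a w < (s : EReal)}

/-- Rogers' conditions for `π` to be the joint law of the terminal value and the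
running maximum of a UI martingale started at `0` with terminal law `μ`. -/
def RogersAdmissible (μ : Measure ℝ) (π : Measure (ℝ × ℝ)) : Prop :=
  Integrable (fun p : ℝ × ℝ => p.1) π ∧
  (∫ p : ℝ × ℝ, p.1 ∂π) = 0 ∧
  π MSetᶜ = 0 ∧
  (∀ s : ℝ, 0 ≤ s →
    s * (π {p : ℝ × ℝ | s ≤ p.2}).toReal ≤ ∫ p in {p : ℝ × ℝ | s ≤ p.2}, p.1 ∂π) ∧
  Measure.map Prod.fst π = μ

/-- The barycenter function of `μ`. -/
def barycenter (μ : Measure ℝ) (w : ℝ) : ℝ :=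
  if 0 < (μ (Ici w)).toReal then (∫ x in Ici w, x ∂μ) / (μ (Ici w)).toReal else w

/-- `g(w) = min(β_μ(w), max(a(w), 0, w))`, the max computed in `EReal`. -/
def ridgeG (μ : Measure ℝ) (a : ℝ → EReal) (w : ℝ) : ℝ :=
  (min ((barycenter μ w : ℝ) : EReal) (max (a w) (max (0 : EReal) ((w : ℝ) : EReal)))).toReal


section HKAux

open Filter Topology

variable {μ : Measure ℝ}


open Filter Topology

variable {μ : Measure ℝ}

lemma den_ne_top (μ : Measure ℝ) [IsProbabilityMeasure μ] (w : ℝ) : μ (Ici w) ≠ ⊤ :=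
  (measure_lt_top μ _).ne

lemma den_pos_iff [IsProbabilityMeasure μ] {w : ℝ} :
    0 < (μ (Ici w)).toReal ↔ μ (Ici w) ≠ 0 := by
  rw [ENNReal.toReal_pos_iff]
  constructor
  · rintro ⟨h1, _⟩; exact h1.ne'
  · intro h; exact ⟨zero_le.lt_of_ne (Ne.symm h), lt_top_iff_ne_top.2 (den_ne_top μ w)⟩

lemma tail_nonneg [IsProbabilityMeasure μ] (hμ : Centred μ) (w : ℝ) :
    0 ≤ ∫ x in Ici w, x ∂μ := by
  rcases le_or_gt 0 w with hw | hw
  · exact setIntegral_nonneg measurableSet_Ici (fun x hx => le_trans hw hx)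
  · have hsplit : (∫ x in Ici w, x ∂μ) + ∫ x in (Ici w)ᶜ, x ∂μ = ∫ x, x ∂μ :=
      integral_add_compl measurableSet_Ici hμ.1
    have hc : (Ici w)ᶜ = Iio w := compl_Ici
    rw [hc] at hsplit
    have h2 : ∫ x in Iio w, x ∂μ ≤ 0 :=
      setIntegral_nonpos measurableSet_Iio (fun x hx => (lt_trans hx hw).le)
    have := hμ.2
    linarith

lemma self_le_barycenter [IsProbabilityMeasure μ] (hμ : Centred μ) (w : ℝ) :
    w ≤ barycenter μ w := by
  unfold barycenter
  split_ifs with h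
  · rw [le_div_iff₀ h]
    calc w * (μ (Ici w)).toReal = ∫ _ in Ici w, w ∂μ := by rw [setIntegral_const, smul_eq_mul, measureReal_def]; ring
    _ ≤ ∫ x in Ici w, x ∂μ :=
        setIntegral_mono_on (integrableOn_const (measure_lt_top μ _).ne)
          (hμ.1.integrableOn) measurableSet_Ici (fun x hx => hx)
  · exact le_refl w

lemma barycenter_nonneg [IsProbabilityMeasure μ] (hμ : Centred μ) (w : ℝ) :
    0 ≤ barycenter μ w := by
  unfold barycenter
  split_ifs with h
  · exact div_nonneg (tail_nonneg hμ w) (le_of_lt h)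
  · -- μ (Ici w) = 0 ; show 0 ≤ w
    by_contra hw
    push_neg at hw
    have hIci : μ (Ici w) = 0 := by
      by_contra h0
      exact h (den_pos_iff.2 h0)
    have hsplit : (∫ x in Ici w, x ∂μ) + ∫ x in (Ici w)ᶜ, x ∂μ = ∫ x, x ∂μ :=
      integral_add_compl measurableSet_Ici hμ.1
    have hIci0 : (∫ x in Ici w, x ∂μ) = 0 := by
      rw [Measure.restrict_eq_zero.2 hIci]; exact integral_zero_measure _
    rw [compl_Ici, hIci0, zero_add, hμ.2] at hsplit
    have hIio : (μ (Iio w)).toReal = 1 := by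
      have : μ (Iio w) = 1 := by
        have := measure_add_measure_compl (μ := μ) (measurableSet_Iio (a := w))
        rw [compl_Iio] at this
        rw [hIci, add_zero] at this
        simpa using this
      simp [this]
    have h2 : ∫ x in Iio w, x ∂μ ≤ w * (μ (Iio w)).toReal := by
      calc ∫ x in Iio w, x ∂μ ≤ ∫ _ in Iio w, w ∂μ :=
            setIntegral_mono_on (hμ.1.integrableOn)
              (integrableOn_const (measure_lt_top μ _).ne)
              measurableSet_Iio (fun x hx => le_of_lt hx)
      _ = w * (μ (Iio w)).toReal := by rw [setIntegral_const, smul_eq_mul, measureReal_def]; ring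
    rw [hIio, mul_one, hsplit] at h2
    linarith

lemma barycenter_mono [IsProbabilityMeasure μ] (hμ : Centred μ) : Monotone (barycenter μ) := by
  intro x₁ x₂ h12
  rcases eq_or_lt_of_le h12 with rfl | h12
  · exact le_refl _
  have hdisj : Disjoint (Ico x₁ x₂) (Ici x₂) := by
    rw [Set.disjoint_left]; intro t ht ht2; exact absurd ht.2 (not_lt.2 ht2)
  by_cases h1 : 0 < (μ (Ici x₁)).toReal
  · have hmeas : μ (Ici x₁) = μ (Ico x₁ x₂) + μ (Ici x₂) := by
      rw [← Ico_union_Ici_eq_Ici h12.le]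
      exact measure_union hdisj measurableSet_Ici
    have htoReal : (μ (Ici x₁)).toReal = (μ (Ico x₁ x₂)).toReal + (μ (Ici x₂)).toReal := by
      rw [hmeas, ENNReal.toReal_add ((measure_lt_top μ _).ne) ((measure_lt_top μ _).ne)]
    have hTsplit : (∫ x in Ici x₁, x ∂μ) = (∫ x in Ico x₁ x₂, x ∂μ) + ∫ x in Ici x₂, x ∂μ := by
      rw [← Ico_union_Ici_eq_Ici h12.le]
      exact setIntegral_union hdisj measurableSet_Ici
        (hμ.1.integrableOn) (hμ.1.integrableOn)
    have hIco_le : (∫ x in Ico x₁ x₂, x ∂μ) ≤ x₂ * (μ (Ico x₁ x₂)).toReal := by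
      calc (∫ x in Ico x₁ x₂, x ∂μ) ≤ ∫ _ in Ico x₁ x₂, x₂ ∂μ :=
            setIntegral_mono_on (hμ.1.integrableOn)
              (integrableOn_const (measure_lt_top μ _).ne)
              measurableSet_Ico (fun x hx => (hx.2).le)
      _ = x₂ * (μ (Ico x₁ x₂)).toReal := by rw [setIntegral_const, smul_eq_mul, measureReal_def]; ring
    by_cases h2 : 0 < (μ (Ici x₂)).toReal
    · -- main case
      have hx2le : x₂ ≤ barycenter μ x₂ := self_le_barycenter hμ x₂
      have hb2 : barycenter μ x₂ = (∫ x in Ici x₂, x ∂μ) / (μ (Ici x₂)).toReal := by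
        unfold barycenter; rw [if_pos h2]
      have hT2 : (∫ x in Ici x₂, x ∂μ) = barycenter μ x₂ * (μ (Ici x₂)).toReal := by
        rw [hb2]; field_simp
      have hb1 : barycenter μ x₁ = (∫ x in Ici x₁, x ∂μ) / (μ (Ici x₁)).toReal := by
        unfold barycenter; rw [if_pos h1]
      rw [hb1, div_le_iff₀ h1]
      calc (∫ x in Ici x₁, x ∂μ) ≤ x₂ * (μ (Ico x₁ x₂)).toReal + barycenter μ x₂ * (μ (Ici x₂)).toReal := by
            rw [hTsplit, hT2]; linarith
      _ ≤ barycenter μ x₂ * (μ (Ico x₁ x₂)).toReal + barycenter μ x₂ * (μ (Ici x₂)).toReal := by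
            have : (0:ℝ) ≤ (μ (Ico x₁ x₂)).toReal := ENNReal.toReal_nonneg
            nlinarith [hx2le]
      _ = barycenter μ x₂ * (μ (Ici x₁)).toReal := by rw [htoReal]; ring
    · -- tail at x₂ is null
      have hnull : μ (Ici x₂) = 0 := by
        by_contra h0; exact h2 (den_pos_iff.2 h0)
      have hb2 : barycenter μ x₂ = x₂ := by unfold barycenter; rw [if_neg h2]
      have hb1 : barycenter μ x₁ = (∫ x in Ici x₁, x ∂μ) / (μ (Ici x₁)).toReal := by
        unfold barycenter; rw [if_pos h1]
      have hT2 : (∫ x in Ici x₂, x ∂μ) = 0 := by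
        rw [Measure.restrict_eq_zero.2 hnull]; exact integral_zero_measure _
      have htr2 : (μ (Ici x₂)).toReal = 0 := by simp [hnull]
      rw [hb2, hb1, div_le_iff₀ h1]
      rw [hTsplit, hT2, add_zero]
      rw [htoReal, htr2, add_zero] at *
      linarith [hIco_le]
  · -- μ (Ici x₁) = 0 : then also μ (Ici x₂) = 0
    have hnull1 : μ (Ici x₁) = 0 := by by_contra h0; exact h1 (den_pos_iff.2 h0)
    have hnull2 : μ (Ici x₂) = 0 :=
      measure_mono_null (Ici_subset_Ici.2 h12.le) hnull1
    have h2 : ¬ 0 < (μ (Ici x₂)).toReal := by simp [hnull2]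
    unfold barycenter
    rw [if_neg h1, if_neg h2]
    exact h12.le



variable {μ : Measure ℝ}


lemma tendsto_tail_integral [IsProbabilityMeasure μ] (hμ : Centred μ)
    {u : ℕ → ℝ} {c : ℝ} (hu : ∀ n, u n < c) (huc : Tendsto u atTop (𝓝 c)) :
    Tendsto (fun n => ∫ x in Ici (u n), x ∂μ) atTop (𝓝 (∫ x in Ici c, x ∂μ)) := by
  have h1 : ∀ n, (∫ x in Ici (u n), x ∂μ) = ∫ x, (Ici (u n)).indicator id x ∂μ := by
    intro n; rw [integral_indicator measurableSet_Ici]; rfl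
  have h2 : (∫ x in Ici c, x ∂μ) = ∫ x, (Ici c).indicator id x ∂μ := by
    rw [integral_indicator measurableSet_Ici]; rfl
  simp only [h1, h2]
  apply tendsto_integral_of_dominated_convergence (fun x => |x|)
  · intro n
    exact ((measurable_id.indicator measurableSet_Ici)).aestronglyMeasurable
  · exact hμ.1.abs
  · intro n
    filter_upwards with x
    rw [Set.indicator]
    split_ifs
    · simp
    · simp
  · filter_upwards with x
    rcases le_or_gt c x with hx | hx
    · have heq : ∀ n, (Ici (u n)).indicator id x = x := by
        intro n
        rw [Set.indicator_of_mem (show x ∈ Ici (u n) from le_trans (hu n).le hx)]; rfl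
      simp only [heq]
      rw [Set.indicator_of_mem (show x ∈ Ici c from hx)]
      exact tendsto_const_nhds
    · have hev : ∀ᶠ n in atTop, (Ici (u n)).indicator id x = 0 := by
        filter_upwards [huc.eventually (eventually_gt_nhds hx)] with n hn
        rw [Set.indicator_of_notMem (show x ∉ Ici (u n) by simpa using hn)]
      rw [Set.indicator_of_notMem (show x ∉ Ici c by simpa using hx)]
      exact Tendsto.congr' (by filter_upwards [hev] with n hn using hn.symm) tendsto_const_nhds

lemma tendsto_tail_mass [IsProbabilityMeasure μ]
    {u : ℕ → ℝ} {c : ℝ} (hu : ∀ n, u n < c) (huc : Tendsto u atTop (𝓝 c)) :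
    Tendsto (fun n => (μ (Ici (u n))).toReal) atTop (𝓝 ((μ (Ici c)).toReal)) := by
  have h1 : ∀ n, (μ (Ici (u n))).toReal = ∫ x, (Ici (u n)).indicator (fun _ => (1:ℝ)) x ∂μ := by
    intro n; rw [integral_indicator_const _ measurableSet_Ici]; simp; rfl
  have h2 : (μ (Ici c)).toReal = ∫ x, (Ici c).indicator (fun _ => (1:ℝ)) x ∂μ := by
    rw [integral_indicator_const _ measurableSet_Ici]; simp; rfl
  simp only [h1, h2]
  apply tendsto_integral_of_dominated_convergence (fun _ => (1:ℝ))
  · intro n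
    exact ((measurable_const.indicator measurableSet_Ici)).aestronglyMeasurable
  · exact integrable_const 1
  · intro n
    filter_upwards with x
    rw [Set.indicator]
    split_ifs <;> simp
  · filter_upwards with x
    rcases le_or_gt c x with hx | hx
    · have heq : ∀ n, (Ici (u n)).indicator (fun _ => (1:ℝ)) x = 1 := by
        intro n
        rw [Set.indicator_of_mem (show x ∈ Ici (u n) from le_trans (hu n).le hx)]
      simp only [heq]
      rw [Set.indicator_of_mem (show x ∈ Ici c from hx)]
      exact tendsto_const_nhds
    · have hev : ∀ᶠ n in atTop, (Ici (u n)).indicator (fun _ => (1:ℝ)) x = 0 := by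
        filter_upwards [huc.eventually (eventually_gt_nhds hx)] with n hn
        rw [Set.indicator_of_notMem (show x ∉ Ici (u n) by simpa using hn)]
      rw [Set.indicator_of_notMem (show x ∉ Ici c by simpa using hx)]
      exact Tendsto.congr' (by filter_upwards [hev] with n hn using hn.symm) tendsto_const_nhds

lemma tendsto_tail_integral_bot [IsProbabilityMeasure μ] (hμ : Centred μ) :
    Tendsto (fun n : ℕ => ∫ x in Ici (-(n:ℝ)), x ∂μ) atTop (𝓝 0) := by
  have h1 : ∀ n : ℕ, (∫ x in Ici (-(n:ℝ)), x ∂μ) = ∫ x, (Ici (-(n:ℝ))).indicator id x ∂μ := by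
    intro n; rw [integral_indicator measurableSet_Ici]; rfl
  simp only [h1]
  have h0 : (0:ℝ) = ∫ x, x ∂μ := hμ.2.symm
  rw [h0]
  apply tendsto_integral_of_dominated_convergence (fun x => |x|)
  · intro n
    exact ((measurable_id.indicator measurableSet_Ici)).aestronglyMeasurable
  · exact hμ.1.abs
  · intro n
    filter_upwards with x
    rw [Set.indicator]
    split_ifs <;> simp
  · filter_upwards with x
    have hev : ∀ᶠ n : ℕ in atTop, (Ici (-(n:ℝ))).indicator id x = x := by
      obtain ⟨N, hN⟩ := exists_nat_ge (-x)
      filter_upwards [eventually_ge_atTop N] with n hn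
      have : -(n:ℝ) ≤ x := by
        have : (N:ℝ) ≤ (n:ℝ) := by exact_mod_cast hn
        linarith
      rw [Set.indicator_of_mem (show x ∈ Ici (-(n:ℝ)) from this)]; rfl
    exact Tendsto.congr' (by filter_upwards [hev] with n hn using hn.symm) tendsto_const_nhds

lemma tendsto_tail_mass_bot [IsProbabilityMeasure μ] :
    Tendsto (fun n : ℕ => (μ (Ici (-(n:ℝ)))).toReal) atTop (𝓝 1) := by
  have h1 : ∀ n : ℕ, (μ (Ici (-(n:ℝ)))).toReal = ∫ x, (Ici (-(n:ℝ))).indicator (fun _ => (1:ℝ)) x ∂μ := by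
    intro n; rw [integral_indicator_const _ measurableSet_Ici]; simp; rfl
  simp only [h1]
  have key : Tendsto (fun n : ℕ => ∫ x, (Ici (-(n:ℝ))).indicator (fun _ => (1:ℝ)) x ∂μ) atTop
      (𝓝 (∫ _, (1:ℝ) ∂μ)) := by
    apply tendsto_integral_of_dominated_convergence (fun _ => (1:ℝ))
    · intro n
      exact ((measurable_const.indicator measurableSet_Ici)).aestronglyMeasurable
    · exact integrable_const 1
    · intro n
      filter_upwards with x
      rw [Set.indicator]
      split_ifs <;> simp
    · filter_upwards with x
      have hev : ∀ᶠ n : ℕ in atTop, (Ici (-(n:ℝ))).indicator (fun _ => (1:ℝ)) x = 1 := by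
        obtain ⟨N, hN⟩ := exists_nat_ge (-x)
        filter_upwards [eventually_ge_atTop N] with n hn
        have : -(n:ℝ) ≤ x := by
          have : (N:ℝ) ≤ (n:ℝ) := by exact_mod_cast hn
          linarith
        rw [Set.indicator_of_mem (show x ∈ Ici (-(n:ℝ)) from this)]
      exact Tendsto.congr' (by filter_upwards [hev] with n hn using hn.symm) tendsto_const_nhds
  simpa using key

lemma exists_barycenter_lt [IsProbabilityMeasure μ] (hμ : Centred μ) {s : ℝ} (hs : 0 < s) :
    ∃ x : ℝ, barycenter μ x < s := by
  have h1 := tendsto_tail_integral_bot hμ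
  have h2 := tendsto_tail_mass_bot (μ := μ)
  have hev1 : ∀ᶠ n : ℕ in atTop, (∫ x in Ici (-(n:ℝ)), x ∂μ) < s/2 := by
    apply h1.eventually_lt_const; positivity
  have hev2 : ∀ᶠ n : ℕ in atTop, (1:ℝ)/2 < (μ (Ici (-(n:ℝ)))).toReal := by
    apply h2.eventually_const_lt; norm_num
  obtain ⟨n, hn1, hn2⟩ := (hev1.and hev2).exists
  refine ⟨-(n:ℝ), ?_⟩
  have hT := tail_nonneg hμ (-(n:ℝ))
  unfold barycenter
  have hpos : 0 < (μ (Ici (-(n:ℝ)))).toReal := by linarith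
  rw [if_pos hpos, div_lt_iff₀ hpos]
  nlinarith


end HKAux

section HKSer

variable {F Fs : ℝ × ℝ → ℝ} {a : ℝ → EReal}

lemma Fs_nonpos (hFc : Continuous F) (hser : SerratedWithRidge F a)
    (hderiv : ∀ w s : ℝ, HasDerivAt (fun t : ℝ => F (w, t)) (Fs (w, s)) s)
    {x s : ℝ} (h : a x ≤ (s : EReal)) : Fs (x, s) ≤ 0 := by
  have key : ∀ t : ℝ, s < t → F (x, t) ≤ F (x, s) := by
    intro t hst
    have hcont : Filter.Tendsto (fun t' : ℝ => F (x, t')) (nhdsWithin s (Ioi s)) (nhds (F (x, s))) := by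
      apply (Continuous.tendsto ?_ s).mono_left nhdsWithin_le_nhds
      exact hFc.comp (continuous_const.prodMk continuous_id)
    apply ge_of_tendsto hcont
    filter_upwards [Ioo_mem_nhdsGT_of_mem (left_mem_Ico.2 hst)] with t' ht'
    have h1 : a x < ((t' : ℝ) : EReal) := lt_of_le_of_lt h (by exact_mod_cast ht'.1)
    have h2 : a x < ((t : ℝ) : EReal) := lt_of_le_of_lt h (by exact_mod_cast hst)
    exact ((hser x).2 h1 h2 ht'.2).le
  have hd : HasDerivWithinAt (fun t => F (x, t)) (Fs (x, s)) (Ioi s) s :=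
    (hderiv x s).hasDerivWithinAt
  rw [hasDerivWithinAt_iff_tendsto_slope] at hd
  have hIoi : (Ioi s) \ {s} = Ioi s := by simp
  rw [hIoi] at hd
  apply le_of_tendsto hd
  filter_upwards [self_mem_nhdsWithin] with t ht
  rw [slope_def_field]
  apply div_nonpos_of_nonpos_of_nonneg
  · linarith [key t ht]
  · have : s < t := ht
    linarith

lemma Fs_nonneg (hFc : Continuous F) (hser : SerratedWithRidge F a)
    (hderiv : ∀ w s : ℝ, HasDerivAt (fun t : ℝ => F (w, t)) (Fs (w, s)) s)
    {x s : ℝ} (h : (s : EReal) ≤ a x) : 0 ≤ Fs (x, s) := by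
  have key : ∀ t : ℝ, t < s → F (x, t) ≤ F (x, s) := by
    intro t hst
    have hcont : Filter.Tendsto (fun t' : ℝ => F (x, t')) (nhdsWithin s (Iio s)) (nhds (F (x, s))) := by
      apply (Continuous.tendsto ?_ s).mono_left nhdsWithin_le_nhds
      exact hFc.comp (continuous_const.prodMk continuous_id)
    apply ge_of_tendsto hcont
    filter_upwards [Ioo_mem_nhdsLT_of_mem (right_mem_Ioc.2 hst)] with t' ht'
    have h1 : ((t' : ℝ) : EReal) < a x := lt_of_lt_of_le (by exact_mod_cast ht'.2) h
    have h2 : ((t : ℝ) : EReal) < a x := lt_of_lt_of_le (by exact_mod_cast hst) h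
    exact ((hser x).1 h2 h1 ht'.1).le
  have hd : HasDerivWithinAt (fun t => F (x, t)) (Fs (x, s)) (Iio s) s :=
    (hderiv x s).hasDerivWithinAt
  rw [hasDerivWithinAt_iff_tendsto_slope] at hd
  have hIio : (Iio s) \ {s} = Iio s := by simp
  rw [hIio] at hd
  apply ge_of_tendsto hd
  filter_upwards [self_mem_nhdsWithin] with t ht
  rw [slope_def_field]
  have h1 : F (x, t) - F (x, s) ≤ 0 := by linarith [key t ht]
  have h2 : t - s < 0 := by have : t < s := ht; linarith
  have := div_nonneg (neg_nonneg.2 h1) (neg_nonneg.2 h2.le)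
  rwa [neg_div_neg_eq] at this

lemma Fs_pos_lt_ridge (hFc : Continuous F) (hser : SerratedWithRidge F a)
    (hderiv : ∀ w s : ℝ, HasDerivAt (fun t : ℝ => F (w, t)) (Fs (w, s)) s)
    {x s : ℝ} (h : 0 < Fs (x, s)) : (s : EReal) < a x := by
  by_contra hc
  push_neg at hc
  exact absurd (Fs_nonpos hFc hser hderiv hc) (not_le.2 h)

end HKSer

section HKRidge

variable {μ : Measure ℝ} {a : ℝ → EReal}

lemma ridge_min_ne_top (μ : Measure ℝ) (a : ℝ → EReal) (x : ℝ) :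
    min ((barycenter μ x : ℝ) : EReal) (max (a x) (max (0 : EReal) ((x : ℝ) : EReal))) ≠ ⊤ :=
  ne_top_of_le_ne_top (EReal.coe_ne_top _) (min_le_left _ _)

lemma ridge_min_ne_bot (μ : Measure ℝ) (a : ℝ → EReal) (x : ℝ) :
    min ((barycenter μ x : ℝ) : EReal) (max (a x) (max (0 : EReal) ((x : ℝ) : EReal))) ≠ ⊥ := by
  apply ne_of_gt
  apply lt_min (EReal.bot_lt_coe _)
  exact lt_of_lt_of_le (EReal.bot_lt_coe 0) (le_trans (by norm_num) (le_max_right _ _))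

lemma ridge_coe (μ : Measure ℝ) (a : ℝ → EReal) (x : ℝ) :
    ((ridgeG μ a x : ℝ) : EReal)
      = min ((barycenter μ x : ℝ) : EReal) (max (a x) (max (0 : EReal) ((x : ℝ) : EReal))) :=
  EReal.coe_toReal (ridge_min_ne_top μ a x) (ridge_min_ne_bot μ a x)

lemma ridgeG_le_barycenter (μ : Measure ℝ) (a : ℝ → EReal) (x : ℝ) :
    ridgeG μ a x ≤ barycenter μ x := by
  have h : ((ridgeG μ a x : ℝ) : EReal) ≤ ((barycenter μ x : ℝ) : EReal) := by
    rw [ridge_coe]; exact min_le_left _ _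
  exact_mod_cast h

lemma le_ridgeG [IsProbabilityMeasure μ] (hμ : Centred μ) (a : ℝ → EReal) (x : ℝ) :
    x ≤ ridgeG μ a x := by
  have h : ((x : ℝ) : EReal) ≤ ((ridgeG μ a x : ℝ) : EReal) := by
    rw [ridge_coe]
    apply le_min
    · exact_mod_cast self_le_barycenter hμ x
    · exact le_trans (le_max_right _ _) (le_max_right _ _)
  exact_mod_cast h

lemma ridgeG_nonneg [IsProbabilityMeasure μ] (hμ : Centred μ) (a : ℝ → EReal) (x : ℝ) :
    0 ≤ ridgeG μ a x := by
  have h : ((0 : ℝ) : EReal) ≤ ((ridgeG μ a x : ℝ) : EReal) := by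
    rw [ridge_coe]
    apply le_min
    · exact_mod_cast barycenter_nonneg hμ x
    · exact le_trans (by norm_num) (le_trans (le_max_left _ _) (le_max_right _ _))
  exact_mod_cast h

lemma ridge_le_a [IsProbabilityMeasure μ] {x s : ℝ}
    (hle : s ≤ ridgeG μ a x) (hs : 0 < s) (hxs : x < s) : (s : EReal) ≤ a x := by
  have h : ((s : ℝ) : EReal) ≤ min ((barycenter μ x : ℝ) : EReal) (max (a x) (max (0 : EReal) ((x : ℝ) : EReal))) := by
    rw [← ridge_coe]
    exact_mod_cast hle
  have hM : ((s : ℝ) : EReal) ≤ max (a x) (max (0 : EReal) ((x : ℝ) : EReal)) :=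
    le_trans h (min_le_right _ _)
  by_contra hc
  push_neg at hc
  have h0 : (0 : EReal) < ((s:ℝ) : EReal) := by exact_mod_cast hs
  have hx : ((x:ℝ) : EReal) < ((s:ℝ) : EReal) := by exact_mod_cast hxs
  have : max (a x) (max (0 : EReal) ((x : ℝ) : EReal)) < ((s:ℝ):EReal) :=
    max_lt hc (max_lt h0 hx)
  exact absurd hM (not_le.2 this)

lemma le_ridge_of [IsProbabilityMeasure μ] {x s : ℝ}
    (ha : (s : EReal) < a x) (hb : s ≤ barycenter μ x) : s ≤ ridgeG μ a x := by
  have h : ((s : ℝ) : EReal) ≤ ((ridgeG μ a x : ℝ) : EReal) := by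
    rw [ridge_coe]
    apply le_min
    · exact_mod_cast hb
    · exact le_trans ha.le (le_max_left _ _)
  exact_mod_cast h

lemma barycenter_lt_of_ridge_lt [IsProbabilityMeasure μ] {x s : ℝ}
    (hlt : ridgeG μ a x < s) (ha : (s : EReal) < a x) : barycenter μ x < s := by
  by_contra hc
  push_neg at hc
  exact absurd (le_ridge_of ha hc) (not_le.2 hlt)

end HKRidge

section HKMono

variable {μ : Measure ℝ} {F Fs : ℝ × ℝ → ℝ} {a : ℝ → EReal}

lemma ridgeG_upset [IsProbabilityMeasure μ] (hμ : Centred μ)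
    (hFc : Continuous F) (hser : SerratedWithRidge F a)
    (hderiv : ∀ w s : ℝ, HasDerivAt (fun t : ℝ => F (w, t)) (Fs (w, s)) s)
    (hratio : ∀ s₀ : ℝ, 0 < s₀ →
      StrictMonoOn (fun w : ℝ => Fs (w, s₀) / (s₀ - w)) (Iio s₀))
    {x' x s : ℝ} (hxx : x' < x) (hs : 0 < s) (hg : s ≤ ridgeG μ a x') :
    s ≤ ridgeG μ a x := by
  rcases le_or_gt s x with hsx | hxs
  · exact le_trans hsx (le_ridgeG hμ a x)
  have hx's : x' < s := lt_trans hxx hxs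
  have hb : s ≤ barycenter μ x :=
    le_trans (le_trans hg (ridgeG_le_barycenter μ a x')) (barycenter_mono hμ hxx.le)
  have ha' : (s : EReal) ≤ a x' := ridge_le_a hg hs hx's
  have hFs' : 0 ≤ Fs (x', s) := Fs_nonneg hFc hser hderiv ha'
  have hρ' : 0 ≤ Fs (x', s) / (s - x') := div_nonneg hFs' (by linarith)
  have hρlt : Fs (x', s) / (s - x') < Fs (x, s) / (s - x) :=
    hratio s hs (show x' ∈ Iio s from hx's) (show x ∈ Iio s from hxs) hxx
  have hFsx : 0 < Fs (x, s) := by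
    have hpos : 0 < Fs (x, s) / (s - x) := lt_of_le_of_lt hρ' hρlt
    by_contra hc
    push_neg at hc
    have : Fs (x, s) / (s - x) ≤ 0 := div_nonpos_of_nonpos_of_nonneg hc (by linarith)
    linarith
  exact le_ridge_of (Fs_pos_lt_ridge hFc hser hderiv hFsx) hb

lemma ridgeG_mono [IsProbabilityMeasure μ] (hμ : Centred μ)
    (hFc : Continuous F) (hser : SerratedWithRidge F a)
    (hderiv : ∀ w s : ℝ, HasDerivAt (fun t : ℝ => F (w, t)) (Fs (w, s)) s)
    (hratio : ∀ s₀ : ℝ, 0 < s₀ →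
      StrictMonoOn (fun w : ℝ => Fs (w, s₀) / (s₀ - w)) (Iio s₀)) :
    Monotone (ridgeG μ a) := by
  intro x' x hxx
  rcases eq_or_lt_of_le hxx with rfl | hxx
  · exact le_refl _
  rcases le_or_gt (ridgeG μ a x') 0 with h0 | h0
  · exact le_trans h0 (ridgeG_nonneg hμ a x)
  exact ridgeG_upset hμ hFc hser hderiv hratio hxx h0 (le_refl _)

end HKMono

/-- The hitting threshold. -/
def hkq (μ : Measure ℝ) (a : ℝ → EReal) (s : ℝ) : ℝ :=
  sInf {x | s ≤ ridgeG μ a x}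

/-- The dual density. -/
def hkh (μ : Measure ℝ) (a : ℝ → EReal) (Fs : ℝ × ℝ → ℝ) (s : ℝ) : ℝ :=
  if 0 < s ∧ hkq μ a s < s then
    -(max (Fs (hkq μ a s, s) / (s - hkq μ a s)) 0) else 0

section HKQ

variable {μ : Measure ℝ} {Fs : ℝ × ℝ → ℝ} {a : ℝ → EReal}

lemma hkq_set_nonempty [IsProbabilityMeasure μ] (hμ : Centred μ) (a : ℝ → EReal) (s : ℝ) :
    {x | s ≤ ridgeG μ a x}.Nonempty :=
  ⟨s, le_ridgeG hμ a s⟩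

lemma hkq_set_bddBelow [IsProbabilityMeasure μ] (hμ : Centred μ) (a : ℝ → EReal)
    {s : ℝ} (hs : 0 < s) : BddBelow {x | s ≤ ridgeG μ a x} := by
  obtain ⟨x₀, hx₀⟩ := exists_barycenter_lt hμ hs
  refine ⟨x₀, fun x hx => ?_⟩
  by_contra hc
  push_neg at hc
  have : barycenter μ x ≤ barycenter μ x₀ := barycenter_mono hμ hc.le
  have : ridgeG μ a x < s := lt_of_le_of_lt (le_trans (ridgeG_le_barycenter μ a x) this) hx₀
  exact absurd hx (not_le.2 (by simpa using this))

lemma hkq_le [IsProbabilityMeasure μ] (hμ : Centred μ) (a : ℝ → EReal) {s : ℝ} (hs : 0 < s) :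
    hkq μ a s ≤ s :=
  csInf_le (hkq_set_bddBelow hμ a hs) (le_ridgeG hμ a s)

lemma hkq_lt_imp [IsProbabilityMeasure μ] (hμ : Centred μ) {a : ℝ → EReal}
    (hg : Monotone (ridgeG μ a)) {s x : ℝ} (hx : hkq μ a s < x) : s ≤ ridgeG μ a x := by
  obtain ⟨x', hx', hlt⟩ := exists_lt_of_csInf_lt (hkq_set_nonempty hμ a s) hx
  exact le_trans hx' (hg hlt.le)

lemma le_hkq_of [IsProbabilityMeasure μ] (hμ : Centred μ) {a : ℝ → EReal}
    (hg : Monotone (ridgeG μ a)) {s x : ℝ} (hx : ridgeG μ a x < s) : x ≤ hkq μ a s := by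
  apply le_csInf (hkq_set_nonempty hμ a s)
  intro x' hx'
  by_contra hc
  push_neg at hc
  exact absurd hx' (not_le.2 (lt_of_le_of_lt (hg hc.le) hx))

lemma hkq_monoOn [IsProbabilityMeasure μ] (hμ : Centred μ) (a : ℝ → EReal)
    {s₁ s₂ : ℝ} (hs₁ : 0 < s₁) (h12 : s₁ ≤ s₂) : hkq μ a s₁ ≤ hkq μ a s₂ :=
  csInf_le_csInf (hkq_set_bddBelow hμ a hs₁) (hkq_set_nonempty hμ a s₂)
    (fun x hx => le_trans h12 hx)

lemma hkh_nonpos (μ : Measure ℝ) (a : ℝ → EReal) (Fs : ℝ × ℝ → ℝ) (s : ℝ) :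
    hkh μ a Fs s ≤ 0 := by
  unfold hkh
  split_ifs
  · simp only [neg_nonpos]
    exact le_max_right _ _
  · exact le_refl 0

lemma hkh_measurable [IsProbabilityMeasure μ] (hμ : Centred μ) (a : ℝ → EReal)
    (hFs_cont : Continuous Fs) :
    Measurable (hkh μ a Fs) := by
  set k : ℝ → ℝ := fun u => hkq μ a (Real.exp u) with hk
  have hkmono : Monotone k := by
    intro u₁ u₂ h
    exact hkq_monoOn hμ a (Real.exp_pos u₁) (Real.exp_le_exp.2 h)
  have hkmeas : Measurable k := hkmono.measurable
  have halt : hkh μ a Fs = fun s =>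
      if 0 < s ∧ k (Real.log s) < s then
        -(max (Fs (k (Real.log s), s) / (s - k (Real.log s))) 0) else 0 := by
    funext s
    by_cases hs : 0 < s
    · have : k (Real.log s) = hkq μ a s := by
        rw [hk]; simp [Real.exp_log hs]
      simp only [hkh, this]
    · simp only [hkh, hs, false_and, if_false]
  rw [halt]
  apply Measurable.ite
  · have h1 : MeasurableSet {s : ℝ | 0 < s} := measurableSet_Ioi
    have h2 : MeasurableSet {s : ℝ | k (Real.log s) < s} :=
      measurableSet_lt (hkmeas.comp Real.measurable_log) measurable_id
    exact h1.inter h2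
  · apply Measurable.neg
    apply Measurable.max _ measurable_const
    apply Measurable.div
    · exact hFs_cont.measurable.comp
        ((hkmeas.comp Real.measurable_log).prodMk measurable_id)
    · exact measurable_id.sub (hkmeas.comp Real.measurable_log)
  · exact measurable_const

end HKQ

section HKPoint

variable {μ : Measure ℝ} {F Fs : ℝ × ℝ → ℝ} {a : ℝ → EReal}

lemma barycenter_gt_near [IsProbabilityMeasure μ] (hμ : Centred μ)
    {s : ℝ} (hs : 0 < s) (hμs : μ (Ioi s) ≠ 0) :
    ∃ x₀ : ℝ, x₀ < s ∧ ∀ x : ℝ, x₀ < x → x < s → s < barycenter μ x := by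
  -- find δ > 0 with μ (Ici (s + δ)) ≠ 0
  have hUnion : Ioi s = ⋃ n : ℕ, Ici (s + 1/((n:ℝ)+1)) := by
    ext t
    simp only [mem_Ioi, mem_iUnion, mem_Ici]
    constructor
    · intro ht
      obtain ⟨n, hn⟩ := exists_nat_one_div_lt (show (0:ℝ) < t - s by linarith)
      exact ⟨n, by linarith⟩
    · rintro ⟨n, hn⟩
      have : (0:ℝ) < 1/((n:ℝ)+1) := by positivity
      linarith
  have hδ : ∃ n : ℕ, μ (Ici (s + 1/((n:ℝ)+1))) ≠ 0 := by
    by_contra hc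
    push_neg at hc
    apply hμs
    rw [hUnion]
    exact measure_iUnion_null hc
  obtain ⟨n, hn⟩ := hδ
  set δ : ℝ := 1/((n:ℝ)+1) with hδdef
  have hδpos : 0 < δ := by positivity
  set ε : ℝ := (μ (Ici (s + δ))).toReal with hεdef
  have hεpos : 0 < ε := ENNReal.toReal_pos hn (measure_lt_top μ _).ne
  refine ⟨s - δ * ε, by nlinarith, fun x hx₀ hxs => ?_⟩
  have hdisj : Disjoint (Ico x (s+δ)) (Ici (s+δ)) := by
    rw [Set.disjoint_left]; intro t ht ht2; exact absurd ht.2 (not_lt.2 ht2)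
  have hunion : Ico x (s+δ) ∪ Ici (s+δ) = Ici x := Ico_union_Ici_eq_Ici (by linarith)
  set d : ℝ := (μ (Ico x (s+δ))).toReal with hddef
  have hden : (μ (Ici x)).toReal = d + ε := by
    rw [← hunion, measure_union hdisj measurableSet_Ici,
      ENNReal.toReal_add (measure_lt_top μ _).ne (measure_lt_top μ _).ne]
  have hd01 : 0 ≤ d ∧ d ≤ 1 := by
    constructor
    · exact ENNReal.toReal_nonneg
    · rw [hddef]
      rw [show (1:ℝ) = (μ univ).toReal by simp]
      apply ENNReal.toReal_mono (measure_lt_top μ _).ne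
      exact measure_mono (subset_univ _)
  have hT : x * d + (s+δ) * ε ≤ ∫ t in Ici x, t ∂μ := by
    have hsplit : (∫ t in Ici x, t ∂μ) = (∫ t in Ico x (s+δ), t ∂μ) + ∫ t in Ici (s+δ), t ∂μ := by
      rw [← hunion]
      exact setIntegral_union hdisj measurableSet_Ici (hμ.1.integrableOn) (hμ.1.integrableOn)
    have h1 : x * d ≤ ∫ t in Ico x (s+δ), t ∂μ := by
      calc x * d = ∫ _ in Ico x (s+δ), x ∂μ := by rw [setIntegral_const, smul_eq_mul, measureReal_def]; ring
      _ ≤ ∫ t in Ico x (s+δ), t ∂μ :=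
          setIntegral_mono_on (integrableOn_const (measure_lt_top μ _).ne)
            (hμ.1.integrableOn) measurableSet_Ico (fun t ht => ht.1)
    have h2 : (s+δ) * ε ≤ ∫ t in Ici (s+δ), t ∂μ := by
      calc (s+δ) * ε = ∫ _ in Ici (s+δ), (s+δ) ∂μ := by rw [setIntegral_const, smul_eq_mul, measureReal_def]; ring
      _ ≤ ∫ t in Ici (s+δ), t ∂μ :=
          setIntegral_mono_on (integrableOn_const (measure_lt_top μ _).ne)
            (hμ.1.integrableOn) measurableSet_Ici (fun t ht => ht)
    linarith
  have hdenpos : 0 < (μ (Ici x)).toReal := by rw [hden]; linarith [hd01.1]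
  unfold barycenter
  rw [if_pos hdenpos, lt_div_iff₀ hdenpos]
  rw [hden]
  nlinarith [hd01.1, hd01.2]

lemma hkq_barycenter_le [IsProbabilityMeasure μ] (hμ : Centred μ)
    (hFc : Continuous F) (hser : SerratedWithRidge F a)
    (hderiv : ∀ w s : ℝ, HasDerivAt (fun t : ℝ => F (w, t)) (Fs (w, s)) s)
    (hFs_cont : Continuous Fs)
    {s : ℝ} (hs : 0 < s) (hqs : hkq μ a s < s) (hFsq : 0 < Fs (hkq μ a s, s))
    (hden : μ (Ici (hkq μ a s)) ≠ 0) :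
    barycenter μ (hkq μ a s) ≤ s := by
  set c : ℝ := hkq μ a s with hcdef
  have hcont : Filter.Tendsto (fun x : ℝ => Fs (x, s)) (nhds c) (nhds (Fs (c, s))) := by
    apply Continuous.tendsto
    exact hFs_cont.comp (continuous_id.prodMk continuous_const)
  have hev : ∀ᶠ x in nhds c, 0 < Fs (x, s) := hcont.eventually (eventually_gt_nhds hFsq)
  obtain ⟨δ, hδpos, hδ⟩ := Metric.eventually_nhds_iff.1 hev
  set u : ℕ → ℝ := fun m => c - (δ/2) * (1/((m:ℝ)+1)) with hudef
  have hult : ∀ m, u m < c := by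
    intro m
    have : (0:ℝ) < (δ/2) * (1/((m:ℝ)+1)) := by positivity
    simp only [hudef]
    linarith
  have huc : Filter.Tendsto u Filter.atTop (nhds c) := by
    have h0 : Filter.Tendsto (fun m : ℕ => (δ/2) * (1/((m:ℝ)+1))) Filter.atTop (nhds 0) := by
      have := tendsto_one_div_add_atTop_nhds_zero_nat (𝕜 := ℝ)
      have h1 := this.const_mul (δ/2)
      simpa using h1
    have hcon : Filter.Tendsto (fun _ : ℕ => c) Filter.atTop (nhds c) := tendsto_const_nhds
    have h2 := hcon.sub h0
    rw [sub_zero] at h2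
    apply h2.congr
    intro m
    simp only [hudef, one_div]
  have hub : ∀ m, barycenter μ (u m) ≤ s := by
    intro m
    apply le_of_lt
    have hdist : dist (u m) c < δ := by
      rw [Real.dist_eq]
      have h1 : (0:ℝ) < (δ/2) * (1/((m:ℝ)+1)) := by positivity
      have h2 : (δ/2) * (1/((m:ℝ)+1)) ≤ δ/2 := by
        apply mul_le_of_le_one_right (by positivity)
        rw [div_le_one (by positivity)]
        linarith [Nat.cast_nonneg (α := ℝ) m]
      simp only [hudef]
      rw [abs_of_nonpos (by linarith)]
      linarith
    have hFsu : 0 < Fs (u m, s) := hδ hdist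
    have hgu : ridgeG μ a (u m) < s := by
      by_contra hc2
      push_neg at hc2
      have : c ≤ u m := csInf_le (hkq_set_bddBelow hμ a hs) hc2
      exact absurd this (not_le.2 (hult m))
    exact barycenter_lt_of_ridge_lt hgu (Fs_pos_lt_ridge hFc hser hderiv hFsu)
  have hdenpos : 0 < (μ (Ici c)).toReal := ENNReal.toReal_pos hden (measure_lt_top μ _).ne
  have htend : Filter.Tendsto (fun m => barycenter μ (u m)) Filter.atTop (nhds (barycenter μ c)) := by
    have h1 := tendsto_tail_integral hμ hult huc
    have h2 := tendsto_tail_mass (μ := μ) hult huc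
    have hbeq : ∀ m, barycenter μ (u m) =
        (∫ x in Ici (u m), x ∂μ) / (μ (Ici (u m))).toReal := by
      intro m
      have : 0 < (μ (Ici (u m))).toReal := by
        apply lt_of_lt_of_le hdenpos
        apply ENNReal.toReal_mono (measure_lt_top μ _).ne
        exact measure_mono (Ici_subset_Ici.2 (hult m).le)
      unfold barycenter
      rw [if_pos this]
    have hbc : barycenter μ c = (∫ x in Ici c, x ∂μ) / (μ (Ici c)).toReal := by
      unfold barycenter; rw [if_pos hdenpos]
    rw [hbc]
    simp only [hbeq]
    exact h1.div h2 (ne_of_gt hdenpos)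
  exact le_of_tendsto htend (Filter.Eventually.of_forall hub)

lemma hk_Fs_eq_ratio {x s : ℝ} (hxs : x < s) (Fs : ℝ × ℝ → ℝ) :
    Fs (x, s) = Fs (x, s) / (s - x) * (s - x) :=
  (div_mul_cancel₀ _ (by linarith : s - x ≠ 0)).symm

/-- pointwise inequality, branch `s ≤ g x` -/
lemma hk_pointwise_ge [IsProbabilityMeasure μ] (hμ : Centred μ)
    (hFc : Continuous F) (hser : SerratedWithRidge F a)
    (hderiv : ∀ w s : ℝ, HasDerivAt (fun t : ℝ => F (w, t)) (Fs (w, s)) s)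
    (hratio : ∀ s₀ : ℝ, 0 < s₀ →
      StrictMonoOn (fun w : ℝ => Fs (w, s₀) / (s₀ - w)) (Iio s₀))
    {x s : ℝ} (hs : 0 < s) (hxs : x < s) (hsg : s ≤ ridgeG μ a x) :
    hkh μ a Fs s * (x - s) ≤ Fs (x, s) := by
  have hqx : hkq μ a s ≤ x := csInf_le (hkq_set_bddBelow hμ a hs) hsg
  have hqs : hkq μ a s < s := lt_of_le_of_lt hqx hxs
  have hρx : 0 ≤ Fs (x, s) / (s - x) :=
    div_nonneg (Fs_nonneg hFc hser hderiv (ridge_le_a hsg hs hxs)) (by linarith)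
  have hmax : max (Fs (hkq μ a s, s) / (s - hkq μ a s)) 0 ≤ Fs (x, s) / (s - x) := by
    rcases eq_or_lt_of_le hqx with heq | hlt
    · rw [heq]
      exact max_le (le_refl _) hρx
    · apply max_le _ hρx
      exact (hratio s hs (show hkq μ a s ∈ Iio s from hqs) (show x ∈ Iio s from hxs) hlt).le
  have hh : hkh μ a Fs s = -(max (Fs (hkq μ a s, s) / (s - hkq μ a s)) 0) := by
    unfold hkh; rw [if_pos ⟨hs, hqs⟩]
  rw [hh, hk_Fs_eq_ratio hxs Fs]
  have := mul_le_mul_of_nonneg_right hmax (show (0:ℝ) ≤ s - x by linarith)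
  nlinarith [this]

/-- pointwise inequality, branch `g x < s` -/
lemma hk_pointwise_le [IsProbabilityMeasure μ] (hμ : Centred μ)
    (hFc : Continuous F) (hser : SerratedWithRidge F a)
    (hderiv : ∀ w s : ℝ, HasDerivAt (fun t : ℝ => F (w, t)) (Fs (w, s)) s)
    (hratio : ∀ s₀ : ℝ, 0 < s₀ →
      StrictMonoOn (fun w : ℝ => Fs (w, s₀) / (s₀ - w)) (Iio s₀))
    (hg : Monotone (ridgeG μ a))
    {x s : ℝ} (hs : 0 < s) (hgx : ridgeG μ a x < s) (hμs : μ (Ioi s) ≠ 0) :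
    Fs (x, s) ≤ hkh μ a Fs s * (x - s) := by
  have hxs : x < s := lt_of_le_of_lt (le_ridgeG hμ a x) hgx
  have hxq : x ≤ hkq μ a s := le_hkq_of hμ hg hgx
  rcases lt_or_ge (hkq μ a s) s with hqs | hqs
  · have hmax : Fs (x, s) / (s - x) ≤ max (Fs (hkq μ a s, s) / (s - hkq μ a s)) 0 := by
      rcases eq_or_lt_of_le hxq with heq | hlt
      · rw [← heq]
        exact le_max_left _ _
      · exact le_trans
          (hratio s hs (show x ∈ Iio s from hxs) (show hkq μ a s ∈ Iio s from hqs) hlt).le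
          (le_max_left _ _)
    have hh : hkh μ a Fs s = -(max (Fs (hkq μ a s, s) / (s - hkq μ a s)) 0) := by
      unfold hkh; rw [if_pos ⟨hs, hqs⟩]
    rw [hh, hk_Fs_eq_ratio hxs Fs]
    have := mul_le_mul_of_nonneg_right hmax (show (0:ℝ) ≤ s - x by linarith)
    nlinarith [this]
  · -- q s = s : show Fs (x,s) ≤ 0
    have hh : hkh μ a Fs s = 0 := by
      unfold hkh
      rw [if_neg]
      rintro ⟨_, h2⟩
      exact absurd h2 (not_lt.2 hqs)
    rw [hh, zero_mul]
    by_contra hc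
    push_neg at hc
    obtain ⟨x₀, hx₀s, hx₀⟩ := barycenter_gt_near hμ hs hμs
    set x' : ℝ := (max x x₀ + s) / 2 with hx'def
    have hmaxlt : max x x₀ < s := max_lt hxs hx₀s
    have hx'1 : x₀ < x' := by
      have : x₀ ≤ max x x₀ := le_max_right _ _
      simp only [hx'def]; linarith
    have hx'2 : x' < s := by simp only [hx'def]; linarith
    have hx'3 : x < x' := by
      have : x ≤ max x x₀ := le_max_left _ _
      simp only [hx'def]; linarith
    have hρx : 0 < Fs (x, s) / (s - x) := div_pos hc (by linarith)
    have hρx' : 0 < Fs (x', s) / (s - x') :=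
      lt_trans hρx (hratio s hs (show x ∈ Iio s from hxs) (show x' ∈ Iio s from hx'2) hx'3)
    have hFsx' : 0 < Fs (x', s) := by
      by_contra hc2
      push_neg at hc2
      have : Fs (x', s) / (s - x') ≤ 0 := div_nonpos_of_nonpos_of_nonneg hc2 (by linarith)
      linarith
    have hax' : (s : EReal) < a x' := Fs_pos_lt_ridge hFc hser hderiv hFsx'
    have hbx' : s ≤ barycenter μ x' := (hx₀ x' hx'1 hx'2).le
    have : s ≤ ridgeG μ a x' := le_ridge_of hax' hbx'
    have : hkq μ a s ≤ x' := csInf_le (hkq_set_bddBelow hμ a hs) this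
    linarith

end HKPoint

/-- The dual integrand. -/
def hkphi (μ : Measure ℝ) (a : ℝ → EReal) (Fs : ℝ × ℝ → ℝ) (p : ℝ × ℝ) (s : ℝ) : ℝ :=
  hkh μ a Fs s * (p.1 - s) *
    ((if s ≤ p.2 then (1:ℝ) else 0) - (if s ≤ ridgeG μ a p.1 then (1:ℝ) else 0))

section HKPi

variable {μ : Measure ℝ} {π : Measure (ℝ × ℝ)} {F Fs : ℝ × ℝ → ℝ} {a : ℝ → EReal}

lemma Aset_meas (s : ℝ) : MeasurableSet {p : ℝ × ℝ | s ≤ p.2} :=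
  measurable_snd measurableSet_Ici

lemma rogers_nonneg [IsProbabilityMeasure π]
    (h1 : Integrable (fun p : ℝ × ℝ => p.1) π)
    (hrog : ∀ s : ℝ, 0 ≤ s →
      s * (π {p : ℝ × ℝ | s ≤ p.2}).toReal ≤ ∫ p in {p : ℝ × ℝ | s ≤ p.2}, p.1 ∂π)
    {s : ℝ} (hs : 0 ≤ s) :
    0 ≤ ∫ p in {p : ℝ × ℝ | s ≤ p.2}, (p.1 - s) ∂π := by
  have hsub : (∫ p in {p : ℝ × ℝ | s ≤ p.2}, (p.1 - s) ∂π)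
      = (∫ p in {p : ℝ × ℝ | s ≤ p.2}, p.1 ∂π) - s * (π {p : ℝ × ℝ | s ≤ p.2}).toReal := by
    rw [integral_sub h1.integrableOn (integrableOn_const (measure_lt_top π _).ne)]
    rw [setIntegral_const, smul_eq_mul, measureReal_def, mul_comm]
  rw [hsub]
  linarith [hrog s hs]

lemma top_null [IsProbabilityMeasure π] [IsProbabilityMeasure μ] [NullSingletonClass μ]
    (h1 : Integrable (fun p : ℝ × ℝ => p.1) π)
    (hrog : ∀ s : ℝ, 0 ≤ s →
      s * (π {p : ℝ × ℝ | s ≤ p.2}).toReal ≤ ∫ p in {p : ℝ × ℝ | s ≤ p.2}, p.1 ∂π)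
    (hmap : Measure.map Prod.fst π = μ)
    {s : ℝ} (hs : 0 < s) (hμs : μ (Ioi s) = 0) : π {p : ℝ × ℝ | s ≤ p.2} = 0 := by
  set A := {p : ℝ × ℝ | s ≤ p.2} with hA
  have hAmeas : MeasurableSet A := Aset_meas s
  have hgt : π {p : ℝ × ℝ | s < p.1} = 0 := by
    have : {p : ℝ × ℝ | s < p.1} = Prod.fst ⁻¹' (Ioi s) := rfl
    rw [this, ← Measure.map_apply measurable_fst measurableSet_Ioi, hmap]
    exact hμs
  have hx_le : ∀ᵐ p ∂π, p.1 ≤ s := by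
    rw [ae_iff]
    convert hgt using 2
    ext p
    simp
  have hub : (∫ p in A, p.1 ∂π) ≤ s * (π A).toReal := by
    have : (∫ p in A, p.1 ∂π) ≤ ∫ _ in A, s ∂π :=
      integral_mono_ae h1.integrableOn (integrableOn_const (measure_lt_top π _).ne)
        (ae_restrict_of_ae hx_le)
    rwa [setIntegral_const, smul_eq_mul, measureReal_def, mul_comm] at this
  have hzero : (∫ p in A, (s - p.1) ∂π) = 0 := by
    have hsub : (∫ p in A, (s - p.1) ∂π)
        = s * (π A).toReal - ∫ p in A, p.1 ∂π := by
      rw [integral_sub (integrableOn_const (C := s) (measure_lt_top π _).ne) h1.integrableOn]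
      rw [setIntegral_const, smul_eq_mul, measureReal_def, mul_comm]
    rw [hsub]
    have := hrog s hs.le
    linarith
  have hnonneg : 0 ≤ᵐ[π.restrict A] fun p : ℝ × ℝ => s - p.1 := by
    apply ae_restrict_of_ae
    filter_upwards [hx_le] with p hp
    simp only [Pi.zero_apply]
    linarith
  have hae := (setIntegral_eq_zero_iff_of_nonneg_ae hnonneg
    ((integrableOn_const (measure_lt_top π _).ne).sub h1.integrableOn)).1 hzero
  have hne : π.restrict A {p : ℝ × ℝ | p.1 ≠ s} = 0 := by
    have := hae
    rw [Filter.EventuallyEq, ae_iff] at this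
    convert this using 2
    ext p
    simp only [mem_setOf_eq]
    constructor
    · intro h h2
      apply h
      simp at h2
      linarith
    · intro h h2
      apply h
      simp
      linarith
  have hAne : π (A ∩ {p : ℝ × ℝ | p.1 ≠ s}) = 0 := by
    have hmeasne : MeasurableSet {p : ℝ × ℝ | p.1 ≠ s} :=
      (measurable_fst (measurableSet_singleton s)).compl
    rw [Measure.restrict_apply hmeasne] at hne
    rw [Set.inter_comm]
    exact hne
  have hAeq : π (A ∩ {p : ℝ × ℝ | p.1 = s}) = 0 := by
    apply measure_mono_null (Set.inter_subset_right)
    have : {p : ℝ × ℝ | p.1 = s} = Prod.fst ⁻¹' {s} := rfl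
    rw [this, ← Measure.map_apply measurable_fst (measurableSet_singleton s), hmap]
    exact measure_singleton s
  have : A ⊆ (A ∩ {p : ℝ × ℝ | p.1 = s}) ∪ (A ∩ {p : ℝ × ℝ | p.1 ≠ s}) := by
    intro p hp
    by_cases hps : p.1 = s
    · exact Or.inl ⟨hp, hps⟩
    · exact Or.inr ⟨hp, hps⟩
  apply le_antisymm _ zero_le
  calc π A ≤ π ((A ∩ {p : ℝ × ℝ | p.1 = s}) ∪ (A ∩ {p : ℝ × ℝ | p.1 ≠ s})) := measure_mono this
  _ ≤ π (A ∩ {p : ℝ × ℝ | p.1 = s}) + π (A ∩ {p : ℝ × ℝ | p.1 ≠ s}) := measure_union_le _ _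
  _ = 0 := by rw [hAeq, hAne, add_zero]

lemma marg_integral (hmap : Measure.map Prod.fst π = μ) {f : ℝ → ℝ}
    (hf : AEStronglyMeasurable f μ) :
    ∫ p : ℝ × ℝ, f p.1 ∂π = ∫ w, f w ∂μ := by
  rw [← hmap] at hf ⊢
  exact (integral_map measurable_fst.aemeasurable hf).symm

lemma marg_integrable (hmap : Measure.map Prod.fst π = μ) {f : ℝ → ℝ}
    (hf : Integrable f μ) : Integrable (fun p : ℝ × ℝ => f p.1) π := by
  rw [← hmap] at hf
  exact (integrable_map_measure hf.aestronglyMeasurable measurable_fst.aemeasurable).1 hf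

lemma hk_upset_ae [IsProbabilityMeasure μ] [NullSingletonClass μ] (hμ : Centred μ)
    (hg : Monotone (ridgeG μ a)) {s : ℝ} (hs : 0 < s) :
    {x : ℝ | s ≤ ridgeG μ a x} =ᵐ[μ] Ioi (hkq μ a s) := by
  rw [Filter.eventuallyEq_set]
  have hnull : μ {hkq μ a s} = 0 := measure_singleton _
  rw [ae_iff]
  apply measure_mono_null _ hnull
  intro x hx
  simp only [mem_setOf_eq, mem_Ioi] at hx ⊢
  by_contra hxq
  apply hx
  rcases lt_trichotomy x (hkq μ a s) with h | h | h
  · constructor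
    · intro hmem
      exact absurd (csInf_le (hkq_set_bddBelow hμ a hs) hmem) (not_le.2 h)
    · intro hmem
      exact absurd hmem (not_lt.2 h.le)
  · exact absurd h hxq
  · constructor
    · intro _; exact h
    · intro _; exact hkq_lt_imp hμ hg h

lemma hk_term2_nonpos [IsProbabilityMeasure μ] [NullSingletonClass μ] (hμ : Centred μ)
    (hFc : Continuous F) (hser : SerratedWithRidge F a)
    (hderiv : ∀ w s : ℝ, HasDerivAt (fun t : ℝ => F (w, t)) (Fs (w, s)) s)
    (hFs_cont : Continuous Fs)
    (hg : Monotone (ridgeG μ a))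
    {s : ℝ} (hs : 0 < s) (hqs : hkq μ a s < s) (hFsq : 0 < Fs (hkq μ a s, s)) :
    (∫ x in {x : ℝ | s ≤ ridgeG μ a x}, (x - s) ∂μ) ≤ 0 := by
  rw [setIntegral_congr_set (hk_upset_ae hμ hg hs)]
  rw [setIntegral_congr_set (Ioi_ae_eq_Ici (a := hkq μ a s))]
  by_cases hden : μ (Ici (hkq μ a s)) = 0
  · rw [Measure.restrict_eq_zero.2 hden]
    simp
  · have hdenpos : 0 < (μ (Ici (hkq μ a s))).toReal :=
      ENNReal.toReal_pos hden (measure_lt_top μ _).ne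
    have hβ : barycenter μ (hkq μ a s) ≤ s :=
      hkq_barycenter_le hμ hFc hser hderiv hFs_cont hs hqs hFsq hden
    have hint : (∫ x in Ici (hkq μ a s), (x - s) ∂μ)
        = (∫ x in Ici (hkq μ a s), x ∂μ) - s * (μ (Ici (hkq μ a s))).toReal := by
      rw [integral_sub hμ.1.integrableOn (integrableOn_const (measure_lt_top μ _).ne)]
      rw [setIntegral_const, smul_eq_mul, measureReal_def, mul_comm]
    have hbar : (∫ x in Ici (hkq μ a s), x ∂μ)
        = barycenter μ (hkq μ a s) * (μ (Ici (hkq μ a s))).toReal := by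
      unfold barycenter
      rw [if_pos hdenpos]
      field_simp
    rw [hint, hbar]
    nlinarith

lemma hk_per_s [IsProbabilityMeasure π] [IsProbabilityMeasure μ] [NullSingletonClass μ] (hμ : Centred μ)
    (hFc : Continuous F) (hser : SerratedWithRidge F a)
    (hderiv : ∀ w s : ℝ, HasDerivAt (fun t : ℝ => F (w, t)) (Fs (w, s)) s)
    (hFs_cont : Continuous Fs)
    (hg : Monotone (ridgeG μ a))
    (h1 : Integrable (fun p : ℝ × ℝ => p.1) π)
    (hrog : ∀ s : ℝ, 0 ≤ s →
      s * (π {p : ℝ × ℝ | s ≤ p.2}).toReal ≤ ∫ p in {p : ℝ × ℝ | s ≤ p.2}, p.1 ∂π)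
    (hmap : Measure.map Prod.fst π = μ)
    (s : ℝ) :
    (∫ p, hkphi μ a Fs p s ∂π) ≤ 0 := by
  by_cases hh0 : hkh μ a Fs s = 0
  · have : (fun p => hkphi μ a Fs p s) = fun _ => (0:ℝ) := by
      funext p; unfold hkphi; rw [hh0]; ring
    rw [this]
    simp
  -- extract positivity data
  have hcond : 0 < s ∧ hkq μ a s < s := by
    by_contra hc
    exact hh0 (by unfold hkh; rw [if_neg hc])
  obtain ⟨hs, hqs⟩ := hcond
  have hhval : hkh μ a Fs s = -(max (Fs (hkq μ a s, s) / (s - hkq μ a s)) 0) := by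
    unfold hkh; rw [if_pos ⟨hs, hqs⟩]
  have hmaxpos : 0 < max (Fs (hkq μ a s, s) / (s - hkq μ a s)) 0 := by
    rcases lt_or_eq_of_le (le_max_right (Fs (hkq μ a s, s) / (s - hkq μ a s)) 0) with h | h
    · exact h
    · exact absurd (by rw [hhval, ← h]; ring) hh0
  have hρpos : 0 < Fs (hkq μ a s, s) / (s - hkq μ a s) := by
    rcases max_cases (Fs (hkq μ a s, s) / (s - hkq μ a s)) 0 with ⟨heq, _⟩ | ⟨heq, hlt⟩
    · rwa [heq] at hmaxpos
    · rw [heq] at hmaxpos; linarith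
  have hFsq : 0 < Fs (hkq μ a s, s) := by
    have h2 : 0 < s - hkq μ a s := by linarith
    have := mul_pos hρpos h2
    rwa [div_mul_cancel₀ _ (ne_of_gt h2)] at this
  have hhneg : hkh μ a Fs s < 0 := by rw [hhval]; linarith
  -- the set of x with s ≤ g x is measurable
  have hgmeas : Measurable (ridgeG μ a) := hg.measurable
  have hsetmeas : MeasurableSet {x : ℝ | s ≤ ridgeG μ a x} := by
    have : {x : ℝ | s ≤ ridgeG μ a x} = (ridgeG μ a) ⁻¹' (Ici s) := rfl
    rw [this]
    exact hgmeas measurableSet_Ici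
  -- f1 and f2
  set f1 : ℝ × ℝ → ℝ := fun p => (p.1 - s) * (if s ≤ p.2 then (1:ℝ) else 0) with hf1
  set f2 : ℝ × ℝ → ℝ := fun p => (p.1 - s) * (if s ≤ ridgeG μ a p.1 then (1:ℝ) else 0) with hf2
  have hf1ind : f1 = {p : ℝ × ℝ | s ≤ p.2}.indicator (fun p => p.1 - s) := by
    funext p
    rw [Set.indicator_apply]
    simp only [hf1, mem_setOf_eq]
    split_ifs <;> ring
  have hf2x : ∀ p : ℝ × ℝ, f2 p = ({x : ℝ | s ≤ ridgeG μ a x}.indicator (fun x => x - s)) p.1 := by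
    intro p
    rw [Set.indicator_apply]
    simp only [hf2, mem_setOf_eq]
    split_ifs <;> ring
  have hif1 : Integrable f1 π := by
    rw [hf1ind]
    exact (h1.sub (integrable_const s)).indicator (Aset_meas s)
  have hifμ : Integrable ({x : ℝ | s ≤ ridgeG μ a x}.indicator (fun x => x - s)) μ :=
    (hμ.1.sub (integrable_const s)).indicator hsetmeas
  have hif2 : Integrable f2 π := by
    have := marg_integrable hmap hifμ
    apply this.congr
    filter_upwards with p
    rw [hf2x p]
  have hint1 : 0 ≤ ∫ p, f1 p ∂π := by
    rw [hf1ind, integral_indicator (Aset_meas s)]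
    exact rogers_nonneg h1 hrog hs.le
  have hint2 : (∫ p, f2 p ∂π) ≤ 0 := by
    have heq : (∫ p, f2 p ∂π)
        = ∫ x, ({x : ℝ | s ≤ ridgeG μ a x}.indicator (fun x => x - s)) x ∂μ := by
      rw [show (fun p : ℝ × ℝ => f2 p)
          = fun p : ℝ × ℝ => ({x : ℝ | s ≤ ridgeG μ a x}.indicator (fun x => x - s)) p.1 from
        funext hf2x]
      exact marg_integral hmap hifμ.aestronglyMeasurable
    rw [heq, integral_indicator hsetmeas]
    exact hk_term2_nonpos hμ hFc hser hderiv hFs_cont hg hs hqs hFsq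
  have hphieq : (fun p => hkphi μ a Fs p s) = fun p => hkh μ a Fs s * (f1 p - f2 p) := by
    funext p
    simp only [hkphi, hf1, hf2]
    ring
  rw [hphieq]
  rw [integral_const_mul, integral_sub hif1 hif2]
  apply mul_nonpos_of_nonpos_of_nonneg hhneg.le
  linarith

end HKPi

/-- comparison function for the negative part -/
def hkpsi (μ : Measure ℝ) (a : ℝ → EReal) (Fs : ℝ × ℝ → ℝ) (p : ℝ × ℝ) (s : ℝ) : ℝ :=
  if 0 ≤ p.2 ∧ p.1 ≤ p.2 then
    (Ioc p.2 (ridgeG μ a p.1)).indicator (fun s => Fs (p.1, s)) s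
  else 0

section HKProd

variable {μ : Measure ℝ} {π : Measure (ℝ × ℝ)} {F Fs : ℝ × ℝ → ℝ} {a : ℝ → EReal}

lemma hkphi_measurable (hg : Monotone (ridgeG μ a)) (hh : Measurable (hkh μ a Fs)) :
    Measurable (fun q : (ℝ × ℝ) × ℝ => hkphi μ a Fs q.1 q.2) := by
  unfold hkphi
  apply Measurable.mul
  · apply Measurable.mul
    · exact hh.comp measurable_snd
    · exact (measurable_fst.fst).sub measurable_snd
  · apply Measurable.sub
    · apply Measurable.ite _ measurable_const measurable_const
      exact measurableSet_le measurable_snd measurable_fst.snd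
    · apply Measurable.ite _ measurable_const measurable_const
      exact measurableSet_le measurable_snd (hg.measurable.comp measurable_fst.fst)

lemma hkpsi_measurable (hg : Monotone (ridgeG μ a)) (hFs_cont : Continuous Fs) :
    Measurable (fun q : (ℝ × ℝ) × ℝ => hkpsi μ a Fs q.1 q.2) := by
  unfold hkpsi
  have hind : (fun q : (ℝ × ℝ) × ℝ =>
      (Ioc q.1.2 (ridgeG μ a q.1.1)).indicator (fun s => Fs (q.1.1, s)) q.2)
      = fun q : (ℝ × ℝ) × ℝ =>
        if q.1.2 < q.2 ∧ q.2 ≤ ridgeG μ a q.1.1 then Fs (q.1.1, q.2) else 0 := by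
    funext q
    rw [Set.indicator_apply]
    rfl
  apply Measurable.ite
  · exact ((measurableSet_le measurable_const measurable_fst.snd).inter
      (measurableSet_le measurable_fst.fst measurable_fst.snd))
  · rw [hind]
    apply Measurable.ite
    · exact ((measurableSet_lt measurable_fst.snd measurable_snd).inter
        (measurableSet_le measurable_snd (hg.measurable.comp measurable_fst.fst)))
    · exact hFs_cont.measurable.comp (measurable_fst.fst.prodMk measurable_snd)
    · exact measurable_const
  · exact measurable_const

lemma hkphi_sect_up (p : ℝ × ℝ) (hgp : ridgeG μ a p.1 ≤ p.2) :
    (fun s => hkphi μ a Fs p s)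
      = (Ioc (ridgeG μ a p.1) p.2).indicator (fun s => hkh μ a Fs s * (p.1 - s)) := by
  funext s
  rw [Set.indicator_apply]
  unfold hkphi
  by_cases h1 : s ≤ ridgeG μ a p.1
  · rw [if_pos (le_trans h1 hgp), if_pos h1,
      if_neg (by simp only [mem_Ioc]; intro h; exact absurd h.1 (not_lt.2 h1))]
    ring
  · push_neg at h1
    by_cases h2 : s ≤ p.2
    · rw [if_pos h2, if_neg (not_le.2 h1), if_pos (mem_Ioc.2 ⟨h1, h2⟩)]
      ring
    · rw [if_neg h2, if_neg (not_le.2 h1),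
        if_neg (by simp only [mem_Ioc]; intro h; exact absurd h.2 h2)]
      ring

lemma hkphi_sect_down (p : ℝ × ℝ) (hgp : p.2 ≤ ridgeG μ a p.1) :
    (fun s => hkphi μ a Fs p s)
      = fun s => -((Ioc p.2 (ridgeG μ a p.1)).indicator (fun s => hkh μ a Fs s * (p.1 - s)) s) := by
  funext s
  rw [Set.indicator_apply]
  unfold hkphi
  by_cases h1 : s ≤ p.2
  · rw [if_pos h1, if_pos (le_trans h1 hgp),
      if_neg (by simp only [mem_Ioc]; intro h; exact absurd h.1 (not_lt.2 h1))]
    ring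
  · push_neg at h1
    by_cases h2 : s ≤ ridgeG μ a p.1
    · rw [if_neg (not_le.2 h1), if_pos h2, if_pos (mem_Ioc.2 ⟨h1, h2⟩)]
      ring
    · rw [if_neg (not_le.2 h1), if_neg h2,
        if_neg (by simp only [mem_Ioc]; intro h; exact absurd h.2 h2)]
      ring

/-- pointwise: the negative part of φ is dominated by ψ, for p in MSet -/
lemma hkphi_neg_le_psi [IsProbabilityMeasure μ] (hμ : Centred μ)
    (hFc : Continuous F) (hser : SerratedWithRidge F a)
    (hderiv : ∀ w s : ℝ, HasDerivAt (fun t : ℝ => F (w, t)) (Fs (w, s)) s)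
    (hratio : ∀ s₀ : ℝ, 0 < s₀ →
      StrictMonoOn (fun w : ℝ => Fs (w, s₀) / (s₀ - w)) (Iio s₀))
    {p : ℝ × ℝ} (hp : 0 ≤ p.2 ∧ p.1 ≤ p.2) (s : ℝ) :
    max (-(hkphi μ a Fs p s)) 0 ≤ hkpsi μ a Fs p s := by
  unfold hkpsi
  rw [if_pos hp, Set.indicator_apply]
  by_cases hmem : s ∈ Ioc p.2 (ridgeG μ a p.1)
  · rw [if_pos hmem]
    obtain ⟨hys, hsg⟩ := hmem
    have hs : 0 < s := lt_of_le_of_lt hp.1 hys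
    have hxs : p.1 < s := lt_of_le_of_lt hp.2 hys
    have hFsge : 0 ≤ Fs (p.1, s) :=
      Fs_nonneg hFc hser hderiv (ridge_le_a hsg hs hxs)
    apply max_le _ hFsge
    have hphival : hkphi μ a Fs p s = -(hkh μ a Fs s * (p.1 - s)) := by
      unfold hkphi
      rw [if_neg (not_le.2 hys), if_pos hsg]
      ring
    rw [hphival, neg_neg]
    exact hk_pointwise_ge hμ hFc hser hderiv hratio hs hxs hsg
  · rw [if_neg hmem]
    simp only [mem_Ioc, not_and_or, not_lt, not_le] at hmem
    apply max_le _ (le_refl 0)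
    rw [neg_nonpos]
    -- show 0 ≤ hkphi p s in the remaining cases
    unfold hkphi
    rcases hmem with hsy | hgs
    · -- s ≤ p.2
      by_cases h2 : s ≤ ridgeG μ a p.1
      · rw [if_pos hsy, if_pos h2]; ring_nf; exact le_refl 0
      · -- ridge < s ≤ y : φ = h * (x - s) ≥ 0
        rw [if_pos hsy, if_neg h2]
        push_neg at h2
        have hxlt : p.1 < s := lt_of_le_of_lt (le_ridgeG hμ a p.1) h2
        have := mul_nonneg (neg_nonneg.2 (hkh_nonpos μ a Fs s))
          (neg_nonneg.2 (by linarith : p.1 - s ≤ 0))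
        nlinarith [this]
    · -- ridgeG < s, and s > p.2 would be.. we have ridgeG < s; subcase on s ≤ p.2
      by_cases h1 : s ≤ p.2
      · rw [if_pos h1, if_neg (not_le.2 hgs)]
        have hxlt : p.1 < s := lt_of_le_of_lt (le_ridgeG hμ a p.1) hgs
        have := mul_nonneg (neg_nonneg.2 (hkh_nonpos μ a Fs s))
          (neg_nonneg.2 (by linarith : p.1 - s ≤ 0))
        nlinarith [this]
      · rw [if_neg h1, if_neg (not_le.2 hgs)]
        ring_nf
        exact le_refl 0

end HKProd

section HKProd2

variable {μ : Measure ℝ} {π : Measure (ℝ × ℝ)} {F Fs : ℝ × ℝ → ℝ} {a : ℝ → EReal}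

lemma ofReal_add_ofReal_neg (r : ℝ) :
    ENNReal.ofReal r + ENNReal.ofReal (-r) = ((‖r‖₊ : NNReal) : ENNReal) := by
  rcases le_or_gt 0 r with h | h
  · rw [ENNReal.ofReal_eq_zero.2 (by linarith : -r ≤ 0), add_zero,
      ← enorm_eq_nnnorm, Real.enorm_eq_ofReal_abs, abs_of_nonneg h]
  · rw [ENNReal.ofReal_eq_zero.2 (by linarith : r ≤ 0), zero_add,
      ← enorm_eq_nnnorm, Real.enorm_eq_ofReal_abs, abs_of_nonpos h.le]

lemma Fs_nonneg_on_Ioc [IsProbabilityMeasure μ] (hμ : Centred μ)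
    (hFc : Continuous F) (hser : SerratedWithRidge F a)
    (hderiv : ∀ w s : ℝ, HasDerivAt (fun t : ℝ => F (w, t)) (Fs (w, s)) s)
    {p : ℝ × ℝ} (hp : 0 ≤ p.2 ∧ p.1 ≤ p.2) {s : ℝ}
    (hs : s ∈ Ioc p.2 (ridgeG μ a p.1)) : 0 ≤ Fs (p.1, s) := by
  have h0 : 0 < s := lt_of_le_of_lt hp.1 hs.1
  have hx : p.1 < s := lt_of_le_of_lt hp.2 hs.1
  exact Fs_nonneg hFc hser hderiv (ridge_le_a hs.2 h0 hx)

lemma hk_ftc (hFc : Continuous F)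
    (hderiv : ∀ w s : ℝ, HasDerivAt (fun t : ℝ => F (w, t)) (Fs (w, s)) s)
    (hFs_cont : Continuous Fs) (x b c : ℝ) (hbc : b ≤ c) :
    (∫ t in Ioc b c, Fs (x, t)) = F (x, c) - F (x, b) := by
  have hcont : Continuous (fun t : ℝ => Fs (x, t)) :=
    hFs_cont.comp (continuous_const.prodMk continuous_id)
  have := intervalIntegral.integral_eq_sub_of_hasDerivAt
    (f := fun t => F (x, t)) (f' := fun t => Fs (x, t)) (a := b) (b := c)
    (fun t _ => hderiv x t) (hcont.intervalIntegrable b c)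
  rwa [intervalIntegral.integral_of_le hbc] at this

lemma hkpsi_integrable [IsProbabilityMeasure π] [IsProbabilityMeasure μ] [NullSingletonClass μ]
    (hμ : Centred μ)
    (hFc : Continuous F) (hser : SerratedWithRidge F a)
    (hderiv : ∀ w s : ℝ, HasDerivAt (fun t : ℝ => F (w, t)) (Fs (w, s)) s)
    (hFs_cont : Continuous Fs)
    (hg : Monotone (ridgeG μ a))
    (hmap : Measure.map Prod.fst π = μ)
    (hFπ : Integrable F π)
    (hint : Integrable (fun w : ℝ => F (w, ridgeG μ a w)) μ) :
    Integrable (fun q : (ℝ × ℝ) × ℝ => hkpsi μ a Fs q.1 q.2) (π.prod volume) := by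
  have hmeas := (hkpsi_measurable (μ := μ) (Fs := Fs) (a := a) hg hFs_cont)
  rw [integrable_prod_iff hmeas.aestronglyMeasurable]
  have hsect : ∀ p : ℝ × ℝ, Integrable (fun s => hkpsi μ a Fs p s) volume := by
    intro p
    unfold hkpsi
    by_cases hp : 0 ≤ p.2 ∧ p.1 ≤ p.2
    · simp only [if_pos hp]
      rw [integrable_indicator_iff measurableSet_Ioc]
      exact (hFs_cont.comp (continuous_const.prodMk continuous_id)).integrableOn_Ioc
    · simp only [if_neg hp]
      exact integrable_zero _ _ _
  constructor
  · filter_upwards with p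
    exact hsect p
  · apply Integrable.mono'
      (g := fun p : ℝ × ℝ => |F (p.1, ridgeG μ a p.1)| + |F p|)
      (((marg_integrable hmap hint).abs).add hFπ.abs)
    · exact (hmeas.norm.aestronglyMeasurable).integral_prod_right'
    · filter_upwards with p
      have hnn : 0 ≤ ∫ s, ‖hkpsi μ a Fs p s‖ := integral_nonneg (fun s => norm_nonneg _)
      rw [Real.norm_of_nonneg hnn]
      by_cases hp : 0 ≤ p.2 ∧ p.1 ≤ p.2
      · by_cases hyg : p.2 ≤ ridgeG μ a p.1
        · have hval : ∀ s, ‖hkpsi μ a Fs p s‖ = hkpsi μ a Fs p s := by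
            intro s
            apply Real.norm_of_nonneg
            unfold hkpsi
            rw [if_pos hp, Set.indicator_apply]
            split_ifs with hmem
            · exact Fs_nonneg_on_Ioc hμ hFc hser hderiv hp hmem
            · exact le_refl 0
          have hcalc : (∫ s, ‖hkpsi μ a Fs p s‖)
              = F (p.1, ridgeG μ a p.1) - F (p.1, p.2) := by
            simp only [hval]
            unfold hkpsi
            simp only [if_pos hp]
            rw [integral_indicator measurableSet_Ioc]
            exact hk_ftc hFc hderiv hFs_cont p.1 p.2 (ridgeG μ a p.1) hyg
          rw [hcalc]
          have h1 : F (p.1, ridgeG μ a p.1) ≤ |F (p.1, ridgeG μ a p.1)| := le_abs_self _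
          have h2 : -F (p.1, p.2) ≤ |F p| := by
            rw [show F p = F (p.1, p.2) by rfl] at *
            exact neg_le_abs _
          linarith
        · push_neg at hyg
          have hval : ∀ s, hkpsi μ a Fs p s = 0 := by
            intro s
            unfold hkpsi
            rw [if_pos hp, Set.Ioc_eq_empty (not_lt.2 hyg.le)]
            simp
          have : (∫ s, ‖hkpsi μ a Fs p s‖) = 0 := by
            simp only [hval, norm_zero, integral_zero]
          rw [this]
          positivity
      · have hval : ∀ s, hkpsi μ a Fs p s = 0 := by
          intro s
          unfold hkpsi
          rw [if_neg hp]
        have : (∫ s, ‖hkpsi μ a Fs p s‖) = 0 := by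
          simp only [hval, norm_zero, integral_zero]
        rw [this]
        positivity

end HKProd2

section HKProd3

variable {μ : Measure ℝ} {π : Measure (ℝ × ℝ)} {F Fs : ℝ × ℝ → ℝ} {a : ℝ → EReal}

lemma ae_fst_MSet [IsProbabilityMeasure π]
    (hMc : π {p : ℝ × ℝ | ¬(0 ≤ p.2 ∧ p.1 ≤ p.2)} = 0) :
    ∀ᵐ q : (ℝ × ℝ) × ℝ ∂(π.prod volume), 0 ≤ q.1.2 ∧ q.1.1 ≤ q.1.2 := by
  rw [ae_iff]
  have hset : {q : (ℝ × ℝ) × ℝ | ¬(0 ≤ q.1.2 ∧ q.1.1 ≤ q.1.2)}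
      = {p : ℝ × ℝ | ¬(0 ≤ p.2 ∧ p.1 ≤ p.2)} ×ˢ (univ : Set ℝ) := by
    ext q
    simp [Set.mem_prod]
  rw [hset, Measure.prod_prod, hMc, zero_mul]

lemma hkphi_neg_integrable [IsProbabilityMeasure π] [IsProbabilityMeasure μ] [NullSingletonClass μ]
    (hμ : Centred μ)
    (hFc : Continuous F) (hser : SerratedWithRidge F a)
    (hderiv : ∀ w s : ℝ, HasDerivAt (fun t : ℝ => F (w, t)) (Fs (w, s)) s)
    (hFs_cont : Continuous Fs)
    (hratio : ∀ s₀ : ℝ, 0 < s₀ →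
      StrictMonoOn (fun w : ℝ => Fs (w, s₀) / (s₀ - w)) (Iio s₀))
    (hg : Monotone (ridgeG μ a)) (hh : Measurable (hkh μ a Fs))
    (hmap : Measure.map Prod.fst π = μ)
    (hMc : π {p : ℝ × ℝ | ¬(0 ≤ p.2 ∧ p.1 ≤ p.2)} = 0)
    (hFπ : Integrable F π)
    (hint : Integrable (fun w : ℝ => F (w, ridgeG μ a w)) μ) :
    Integrable (fun q : (ℝ × ℝ) × ℝ => max (-(hkphi μ a Fs q.1 q.2)) 0) (π.prod volume) := by
  apply Integrable.mono'
    (hkpsi_integrable hμ hFc hser hderiv hFs_cont hg hmap hFπ hint)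
  · exact (((hkphi_measurable hg hh).neg.max measurable_const)).aestronglyMeasurable
  · filter_upwards [ae_fst_MSet hMc] with q hq
    rw [Real.norm_of_nonneg (le_max_right _ _)]
    exact hkphi_neg_le_psi hμ hFc hser hderiv hratio hq q.2

lemma hkphi_sect_integrable [IsProbabilityMeasure π]
    (hg : Monotone (ridgeG μ a)) (hh : Measurable (hkh μ a Fs))
    (h1 : Integrable (fun p : ℝ × ℝ => p.1) π) (s : ℝ) :
    Integrable (fun p : ℝ × ℝ => hkphi μ a Fs p s) π := by
  have hsectmeas : Measurable (fun p : ℝ × ℝ => hkphi μ a Fs p s) :=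
    (hkphi_measurable hg hh).comp (measurable_id.prodMk measurable_const)
  apply Integrable.mono'
    (g := fun p : ℝ × ℝ => |hkh μ a Fs s| * (|p.1| + |s|))
    ((h1.abs.add (integrable_const _)).const_mul _)
    hsectmeas.aestronglyMeasurable
  filter_upwards with p
  unfold hkphi
  rw [Real.norm_eq_abs, abs_mul, abs_mul]
  have hχ : |(if s ≤ p.2 then (1:ℝ) else 0) - (if s ≤ ridgeG μ a p.1 then (1:ℝ) else 0)| ≤ 1 := by
    split_ifs <;> norm_num
  have hxs : |p.1 - s| ≤ |p.1| + |s| := abs_sub _ _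
  have h0 : (0:ℝ) ≤ |hkh μ a Fs s| := abs_nonneg _
  have h2 : (0:ℝ) ≤ |p.1 - s| := abs_nonneg _
  calc |hkh μ a Fs s| * |p.1 - s| *
        |(if s ≤ p.2 then (1:ℝ) else 0) - (if s ≤ ridgeG μ a p.1 then (1:ℝ) else 0)|
      ≤ |hkh μ a Fs s| * |p.1 - s| * 1 := by
        apply mul_le_mul_of_nonneg_left hχ (by positivity)
  _ = |hkh μ a Fs s| * |p.1 - s| := by ring
  _ ≤ |hkh μ a Fs s| * (|p.1| + |s|) := mul_le_mul_of_nonneg_left hxs h0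

lemma hk_lint_per_s [IsProbabilityMeasure π] [IsProbabilityMeasure μ] [NullSingletonClass μ]
    (hμ : Centred μ)
    (hFc : Continuous F) (hser : SerratedWithRidge F a)
    (hderiv : ∀ w s : ℝ, HasDerivAt (fun t : ℝ => F (w, t)) (Fs (w, s)) s)
    (hFs_cont : Continuous Fs)
    (hg : Monotone (ridgeG μ a)) (hh : Measurable (hkh μ a Fs))
    (h1 : Integrable (fun p : ℝ × ℝ => p.1) π)
    (hrog : ∀ s : ℝ, 0 ≤ s →
      s * (π {p : ℝ × ℝ | s ≤ p.2}).toReal ≤ ∫ p in {p : ℝ × ℝ | s ≤ p.2}, p.1 ∂π)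
    (hmap : Measure.map Prod.fst π = μ) (s : ℝ) :
    (∫⁻ p, ENNReal.ofReal (hkphi μ a Fs p s) ∂π)
      ≤ ∫⁻ p, ENNReal.ofReal (-(hkphi μ a Fs p s)) ∂π := by
  have hsint := hkphi_sect_integrable (μ := μ) hg hh h1 s
  have hle := hk_per_s hμ hFc hser hderiv hFs_cont hg h1 hrog hmap s
  have heq := integral_eq_lintegral_pos_part_sub_lintegral_neg_part hsint
  have hfin : ∀ (f : ℝ × ℝ → ℝ), Integrable f π →
      (∫⁻ p, ENNReal.ofReal (f p) ∂π) < ⊤ := by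
    intro f hf
    apply lt_of_le_of_lt _ hf.hasFiniteIntegral
    apply lintegral_mono
    intro p
    show ENNReal.ofReal (f p) ≤ ((‖f p‖₊ : NNReal) : ENNReal)
    rw [← enorm_eq_nnnorm, Real.enorm_eq_ofReal_abs]
    exact ENNReal.ofReal_le_ofReal (le_abs_self _)
  have hfinP := hfin _ hsint
  have hfinN := hfin _ hsint.neg
  have hNeq : (∫⁻ p, ENNReal.ofReal (-(hkphi μ a Fs p s)) ∂π) < ⊤ := by
    convert hfinN using 2
    rfl
  rw [heq] at hle
  have htoReal : (∫⁻ p, ENNReal.ofReal (hkphi μ a Fs p s) ∂π).toReal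
      ≤ (∫⁻ p, ENNReal.ofReal (-(hkphi μ a Fs p s)) ∂π).toReal := by linarith
  exact (ENNReal.toReal_le_toReal hfinP.ne hNeq.ne).1 htoReal

lemma hkphi_integrable_nonpos [IsProbabilityMeasure π] [IsProbabilityMeasure μ] [NullSingletonClass μ]
    (hμ : Centred μ)
    (hFc : Continuous F) (hser : SerratedWithRidge F a)
    (hderiv : ∀ w s : ℝ, HasDerivAt (fun t : ℝ => F (w, t)) (Fs (w, s)) s)
    (hFs_cont : Continuous Fs)
    (hratio : ∀ s₀ : ℝ, 0 < s₀ →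
      StrictMonoOn (fun w : ℝ => Fs (w, s₀) / (s₀ - w)) (Iio s₀))
    (hg : Monotone (ridgeG μ a)) (hh : Measurable (hkh μ a Fs))
    (h1 : Integrable (fun p : ℝ × ℝ => p.1) π)
    (hrog : ∀ s : ℝ, 0 ≤ s →
      s * (π {p : ℝ × ℝ | s ≤ p.2}).toReal ≤ ∫ p in {p : ℝ × ℝ | s ≤ p.2}, p.1 ∂π)
    (hmap : Measure.map Prod.fst π = μ)
    (hMc : π {p : ℝ × ℝ | ¬(0 ≤ p.2 ∧ p.1 ≤ p.2)} = 0)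
    (hFπ : Integrable F π)
    (hint : Integrable (fun w : ℝ => F (w, ridgeG μ a w)) μ) :
    Integrable (fun q : (ℝ × ℝ) × ℝ => hkphi μ a Fs q.1 q.2) (π.prod volume) ∧
    (∫ q : (ℝ × ℝ) × ℝ, hkphi μ a Fs q.1 q.2 ∂(π.prod volume)) ≤ 0 := by
  have hΦmeas := hkphi_measurable (μ := μ) hg hh
  have hneg_int := hkphi_neg_integrable hμ hFc hser hderiv hFs_cont hratio hg hh hmap hMc hFπ hint
  have hN : (∫⁻ q, ENNReal.ofReal (-(hkphi μ a Fs q.1 q.2)) ∂(π.prod volume)) < ⊤ := by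
    apply lt_of_le_of_lt _ hneg_int.hasFiniteIntegral
    apply lintegral_mono
    intro q
    show ENNReal.ofReal (-(hkphi μ a Fs q.1 q.2))
        ≤ ((‖max (-(hkphi μ a Fs q.1 q.2)) 0‖₊ : NNReal) : ENNReal)
    rw [← enorm_eq_nnnorm, Real.enorm_eq_ofReal_abs,
      abs_of_nonneg (le_max_right (-(hkphi μ a Fs q.1 q.2)) 0)]
    exact ENNReal.ofReal_le_ofReal (le_max_left _ _)
  have hP : (∫⁻ q, ENNReal.ofReal (hkphi μ a Fs q.1 q.2) ∂(π.prod volume))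
      ≤ ∫⁻ q, ENNReal.ofReal (-(hkphi μ a Fs q.1 q.2)) ∂(π.prod volume) := by
    rw [lintegral_prod_symm (fun q : (ℝ × ℝ) × ℝ => ENNReal.ofReal (hkphi μ a Fs q.1 q.2))
        (ENNReal.measurable_ofReal.comp hΦmeas).aemeasurable,
      lintegral_prod_symm (fun q : (ℝ × ℝ) × ℝ => ENNReal.ofReal (-(hkphi μ a Fs q.1 q.2)))
        (ENNReal.measurable_ofReal.comp hΦmeas.neg).aemeasurable]
    apply lintegral_mono
    intro s
    exact hk_lint_per_s hμ hFc hser hderiv hFs_cont hg hh h1 hrog hmap s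
  have hfinP : (∫⁻ q, ENNReal.ofReal (hkphi μ a Fs q.1 q.2) ∂(π.prod volume)) < ⊤ :=
    lt_of_le_of_lt hP hN
  have hΦint : Integrable (fun q : (ℝ × ℝ) × ℝ => hkphi μ a Fs q.1 q.2) (π.prod volume) := by
    refine ⟨hΦmeas.aestronglyMeasurable, ?_⟩
    unfold HasFiniteIntegral
    simp only [enorm_eq_nnnorm]
    have hpt : (fun q : (ℝ × ℝ) × ℝ => ((‖hkphi μ a Fs q.1 q.2‖₊ : NNReal) : ENNReal))
        = fun q => ENNReal.ofReal (hkphi μ a Fs q.1 q.2)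
            + ENNReal.ofReal (-(hkphi μ a Fs q.1 q.2)) := by
      funext q
      rw [ofReal_add_ofReal_neg]
    rw [hpt, lintegral_add_left
      (f := fun q : (ℝ × ℝ) × ℝ => ENNReal.ofReal (hkphi μ a Fs q.1 q.2))
      (ENNReal.measurable_ofReal.comp hΦmeas)]
    exact ENNReal.add_lt_top.2 ⟨hfinP, hN⟩
  refine ⟨hΦint, ?_⟩
  rw [integral_eq_lintegral_pos_part_sub_lintegral_neg_part hΦint]
  have := ENNReal.toReal_mono hN.ne hP
  linarith

end HKProd3

section HKPath

variable {μ : Measure ℝ} {π : Measure (ℝ × ℝ)} {F Fs : ℝ × ℝ → ℝ} {a : ℝ → EReal}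

lemma hk_pathwise [IsProbabilityMeasure μ] [NullSingletonClass μ] (hμ : Centred μ)
    (hFc : Continuous F) (hser : SerratedWithRidge F a)
    (hderiv : ∀ w s : ℝ, HasDerivAt (fun t : ℝ => F (w, t)) (Fs (w, s)) s)
    (hFs_cont : Continuous Fs)
    (hratio : ∀ s₀ : ℝ, 0 < s₀ →
      StrictMonoOn (fun w : ℝ => Fs (w, s₀) / (s₀ - w)) (Iio s₀))
    (hg : Monotone (ridgeG μ a))
    {p : ℝ × ℝ} (hp : 0 ≤ p.2 ∧ p.1 ≤ p.2)
    (hIoi : ∀ s : ℝ, 0 < s → s < p.2 → μ (Ioi s) ≠ 0)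
    (hsect : Integrable (fun s => hkphi μ a Fs p s) volume) :
    F p - F (p.1, ridgeG μ a p.1) ≤ ∫ s, hkphi μ a Fs p s := by
  have hFp : F p = F (p.1, p.2) := rfl
  rcases lt_trichotomy p.2 (ridgeG μ a p.1) with hlt | heq | hgt
  · -- p.2 < ridge : downward branch
    have hsecteq := hkphi_sect_down (μ := μ) (Fs := Fs) (a := a) p hlt.le
    have hΛ : (∫ s, hkphi μ a Fs p s)
        = -(∫ s in Ioc p.2 (ridgeG μ a p.1), hkh μ a Fs s * (p.1 - s)) := by
      rw [hsecteq, integral_neg, integral_indicator measurableSet_Ioc]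
    have hD : F p - F (p.1, ridgeG μ a p.1)
        = -(∫ s in Ioc p.2 (ridgeG μ a p.1), Fs (p.1, s)) := by
      rw [hk_ftc hFc hderiv hFs_cont p.1 p.2 (ridgeG μ a p.1) hlt.le, hFp]
      ring
    have hIoc_int_h : IntegrableOn (fun s => hkh μ a Fs s * (p.1 - s))
        (Ioc p.2 (ridgeG μ a p.1)) volume := by
      rw [← integrable_indicator_iff measurableSet_Ioc]
      have : Integrable (fun s =>
          -((Ioc p.2 (ridgeG μ a p.1)).indicator (fun s => hkh μ a Fs s * (p.1 - s)) s))
          volume := by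
        rw [← hsecteq]
        exact hsect
      exact integrable_neg_iff.1 this
    have hmono : (∫ s in Ioc p.2 (ridgeG μ a p.1), hkh μ a Fs s * (p.1 - s))
        ≤ ∫ s in Ioc p.2 (ridgeG μ a p.1), Fs (p.1, s) := by
      apply setIntegral_mono_on hIoc_int_h
        ((hFs_cont.comp (continuous_const.prodMk continuous_id)).integrableOn_Ioc)
        measurableSet_Ioc
      intro s hs
      have hs0 : 0 < s := lt_of_le_of_lt hp.1 hs.1
      have hxs : p.1 < s := lt_of_le_of_lt hp.2 hs.1
      exact hk_pointwise_ge hμ hFc hser hderiv hratio hs0 hxs hs.2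
    rw [hΛ, hD]
    linarith
  · -- equal
    have hsecteq := hkphi_sect_up (μ := μ) (Fs := Fs) (a := a) p heq.ge
    have hzero : (∫ s, hkphi μ a Fs p s) = 0 := by
      rw [hsecteq, ← heq, Set.Ioc_self]
      simp
    rw [hzero, hFp, heq]
    simp
  · -- ridge < p.2 : upward branch
    have hsecteq := hkphi_sect_up (μ := μ) (Fs := Fs) (a := a) p hgt.le
    have hΛ : (∫ s, hkphi μ a Fs p s)
        = ∫ s in Ioc (ridgeG μ a p.1) p.2, hkh μ a Fs s * (p.1 - s) := by
      rw [hsecteq, integral_indicator measurableSet_Ioc]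
    have hD : F p - F (p.1, ridgeG μ a p.1)
        = ∫ s in Ioc (ridgeG μ a p.1) p.2, Fs (p.1, s) := by
      rw [hk_ftc hFc hderiv hFs_cont p.1 (ridgeG μ a p.1) p.2 hgt.le, hFp]
    have hIoc_int_h : IntegrableOn (fun s => hkh μ a Fs s * (p.1 - s))
        (Ioc (ridgeG μ a p.1) p.2) volume := by
      rw [← integrable_indicator_iff measurableSet_Ioc, ← hsecteq]
      exact hsect
    have hmono : (∫ s in Ioo (ridgeG μ a p.1) p.2, Fs (p.1, s))
        ≤ ∫ s in Ioo (ridgeG μ a p.1) p.2, hkh μ a Fs s * (p.1 - s) := by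
      apply setIntegral_mono_on
        (((hFs_cont.comp (continuous_const.prodMk continuous_id)).integrableOn_Ioc).mono_set
          Ioo_subset_Ioc_self)
        (hIoc_int_h.mono_set Ioo_subset_Ioc_self)
        measurableSet_Ioo
      intro s hs
      have hs0 : 0 < s := lt_of_le_of_lt (ridgeG_nonneg hμ a p.1) hs.1
      exact hk_pointwise_le hμ hFc hser hderiv hratio hg hs0 hs.1 (hIoi s hs0 hs.2)
    calc F p - F (p.1, ridgeG μ a p.1)
        = ∫ s in Ioc (ridgeG μ a p.1) p.2, Fs (p.1, s) := hD
    _ = ∫ s in Ioo (ridgeG μ a p.1) p.2, Fs (p.1, s) :=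
        (setIntegral_congr_set Ioo_ae_eq_Ioc).symm
    _ ≤ ∫ s in Ioo (ridgeG μ a p.1) p.2, hkh μ a Fs s * (p.1 - s) := hmono
    _ = ∫ s in Ioc (ridgeG μ a p.1) p.2, hkh μ a Fs s * (p.1 - s) :=
        setIntegral_congr_set Ioo_ae_eq_Ioc
    _ = ∫ s, hkphi μ a Fs p s := hΛ.symm

end HKPath

/-- optimality of the ridge law under the Hobson–Klimmek derivative
condition for serrated cost functions. -/
theorem general_optimal_HK (μ : Measure ℝ) [IsProbabilityMeasure μ] [NullSingletonClass μ]
    (hμ : Centred μ)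
    (F Fs : ℝ × ℝ → ℝ) (a : ℝ → EReal)
    (hFc : Continuous F) (hser : SerratedWithRidge F a)
    (hderiv : ∀ w s : ℝ, HasDerivAt (fun t : ℝ => F (w, t)) (Fs (w, s)) s)
    (hFs_cont : Continuous Fs)
    (hratio : ∀ s₀ : ℝ, 0 < s₀ →
      StrictMonoOn (fun w : ℝ => Fs (w, s₀) / (s₀ - w)) (Iio s₀))
    (hint : Integrable (fun w : ℝ => F (w, ridgeG μ a w)) μ)
    (π : Measure (ℝ × ℝ)) [IsProbabilityMeasure π]
    (hπ : RogersAdmissible μ π) (hFπ : Integrable F π) :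
    (∫ p, F p ∂π) ≤ ∫ w, F (w, ridgeG μ a w) ∂μ := by
  obtain ⟨h1, hmean, hMc0, hrog, hmap⟩ := hπ
  have hg : Monotone (ridgeG μ a) := ridgeG_mono hμ hFc hser hderiv hratio
  have hh : Measurable (hkh μ a Fs) := hkh_measurable hμ a hFs_cont
  have hMc : π {p : ℝ × ℝ | ¬(0 ≤ p.2 ∧ p.1 ≤ p.2)} = 0 := by
    have : MSetᶜ = {p : ℝ × ℝ | ¬(0 ≤ p.2 ∧ p.1 ≤ p.2)} := by
      ext p
      simp [MSet]
    rwa [this] at hMc0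
  obtain ⟨hΦint, hΦnonpos⟩ := hkphi_integrable_nonpos hμ hFc hser hderiv hFs_cont hratio
    hg hh h1 hrog hmap hMc hFπ hint
  -- a.e. facts
  have hae_sect : ∀ᵐ p ∂π, Integrable (fun s => hkphi μ a Fs p s) volume :=
    hΦint.prod_right_ae
  have hae_M : ∀ᵐ p ∂π, 0 ≤ p.2 ∧ p.1 ≤ p.2 := by
    rw [ae_iff]
    exact hMc
  have hae_Ioi : ∀ᵐ p ∂π, ∀ s : ℝ, 0 < s → s < p.2 → μ (Ioi s) ≠ 0 := by
    set Tset : ℚ → Set (ℝ × ℝ) := fun r =>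
      if 0 < (r:ℝ) ∧ μ (Ioi (r:ℝ)) = 0 then {p : ℝ × ℝ | (r:ℝ) ≤ p.2} else ∅ with hTdef
    have hT : π (⋃ r : ℚ, Tset r) = 0 := by
      apply measure_iUnion_null
      intro r
      simp only [hTdef]
      split_ifs with hc
      · exact top_null h1 hrog hmap hc.1 hc.2
      · simp
    rw [ae_iff]
    apply measure_mono_null _ hT
    intro p hp
    simp only [mem_setOf_eq] at hp
    push_neg at hp
    obtain ⟨s, hs0, hsy, hμs⟩ := hp
    obtain ⟨r, hsr, hry⟩ := exists_rat_btwn hsy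
    have hr0 : 0 < (r:ℝ) := lt_trans hs0 hsr
    have hrnull : μ (Ioi (r:ℝ)) = 0 :=
      measure_mono_null (Ioi_subset_Ioi hsr.le) hμs
    apply mem_iUnion.2 ⟨r, ?_⟩
    simp only [hTdef]
    rw [if_pos ⟨hr0, hrnull⟩]
    exact hry.le
  -- integrabilities
  have hFgπ : Integrable (fun p : ℝ × ℝ => F (p.1, ridgeG μ a p.1)) π :=
    marg_integrable hmap hint
  have hDint : Integrable (fun p : ℝ × ℝ => F p - F (p.1, ridgeG μ a p.1)) π :=
    hFπ.sub hFgπ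
  have hΛint : Integrable (fun p : ℝ × ℝ => ∫ s, hkphi μ a Fs p s) π :=
    hΦint.integral_prod_left
  -- pathwise comparison
  have hae : ∀ᵐ p ∂π, F p - F (p.1, ridgeG μ a p.1) ≤ ∫ s, hkphi μ a Fs p s := by
    filter_upwards [hae_M, hae_Ioi, hae_sect] with p h1' h2' h3'
    exact hk_pathwise hμ hFc hser hderiv hFs_cont hratio hg h1' h2' h3'
  have hkey : (∫ p, (F p - F (p.1, ridgeG μ a p.1)) ∂π)
      ≤ ∫ p, (∫ s, hkphi μ a Fs p s) ∂π :=
    integral_mono_ae hDint hΛint hae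
  have hswap : (∫ p, (∫ s, hkphi μ a Fs p s) ∂π)
      = ∫ q : (ℝ × ℝ) × ℝ, hkphi μ a Fs q.1 q.2 ∂(π.prod volume) :=
    (integral_prod _ hΦint).symm
  have hsub : (∫ p, (F p - F (p.1, ridgeG μ a p.1)) ∂π)
      = (∫ p, F p ∂π) - ∫ p, F (p.1, ridgeG μ a p.1) ∂π :=
    integral_sub hFπ hFgπ
  have hmarg : (∫ p : ℝ × ℝ, F (p.1, ridgeG μ a p.1) ∂π)
      = ∫ w, F (w, ridgeG μ a w) ∂μ :=
    marg_integral hmap hint.aestronglyMeasurable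
  rw [hsub, hswap] at hkey
  rw [hmarg] at hkey
  linarith
end
end

section
/- Let μ be a centred probability measure on ℝ with no atoms and let π be a Rogers-admissible probability measure with marginal μ. Then for every l > 0, the second-marginal tail satisfies π(ℝ × [l, ∞)) ≤ μ({x ∈ ℝ : β_μ(x) ≥ l}); i.e. the probability that the second coordinate is at least l is bounded by the μ-mass of the set where the barycenter function is at least l, the bound attained by the Azéma–Yor joint law (the pushforward of μ under w ↦ (w, β_μ(w))). -/
open MeasureTheory Set

noncomputable section

lemma bary_ge_self (μ : Measure ℝ) [IsFiniteMeasure μ]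
    (hint : Integrable (fun x : ℝ => x) μ) (w : ℝ) : w ≤ barycenter μ w := by
  unfold barycenter
  split_ifs with h
  · rw [le_div_iff₀ h]
    have h1 : ∫ _x in Ici w, (w : ℝ) ∂μ ≤ ∫ x in Ici w, x ∂μ :=
      setIntegral_mono_on (integrableOn_const (measure_ne_top _ _))
        hint.integrableOn measurableSet_Ici (fun x hx => hx)
    rw [setIntegral_const, smul_eq_mul, measureReal_def] at h1
    linarith
  · exact le_refl w

lemma bary_mono (μ : Measure ℝ) [IsFiniteMeasure μ]
    (hint : Integrable (fun x : ℝ => x) μ) : Monotone (barycenter μ) := by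
  intro w₁ w₂ h12
  by_cases h₂ : 0 < (μ (Ici w₂)).toReal
  · have hm₂ : (μ (Ici w₂)).toReal ≤ (μ (Ici w₁)).toReal :=
      ENNReal.toReal_mono (measure_ne_top _ _) (measure_mono (Ici_subset_Ici.2 h12))
    have h₁ : 0 < (μ (Ici w₁)).toReal := lt_of_lt_of_le h₂ hm₂
    have hw2b : w₂ ≤ (∫ x in Ici w₂, x ∂μ) / (μ (Ici w₂)).toReal := by
      have := bary_ge_self μ hint w₂
      rwa [barycenter, if_pos h₂] at this
    simp only [barycenter, if_pos h₁, if_pos h₂]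
    rw [div_le_iff₀ h₁]
    set b := (∫ x in Ici w₂, x ∂μ) / (μ (Ici w₂)).toReal with hbdef
    have hdisj : Disjoint (Ico w₁ w₂) (Ici w₂) := by
      rw [Set.disjoint_left]
      rintro x ⟨-, hx⟩ hx'
      exact absurd hx' (not_le.2 hx)
    have hsplit : ∫ x in Ici w₁, x ∂μ = (∫ x in Ico w₁ w₂, x ∂μ) + ∫ x in Ici w₂, x ∂μ := by
      rw [← setIntegral_union hdisj measurableSet_Ici hint.integrableOn hint.integrableOn,
        Ico_union_Ici_eq_Ici h12]
    have hmass : (μ (Ico w₁ w₂)).toReal + (μ (Ici w₂)).toReal = (μ (Ici w₁)).toReal := by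
      rw [← ENNReal.toReal_add (measure_ne_top _ _) (measure_ne_top _ _),
        ← measure_union hdisj measurableSet_Ici, Ico_union_Ici_eq_Ici h12]
    have hIco : ∫ x in Ico w₁ w₂, x ∂μ ≤ (μ (Ico w₁ w₂)).toReal * w₂ := by
      have h1 : ∫ x in Ico w₁ w₂, x ∂μ ≤ ∫ _x in Ico w₁ w₂, (w₂ : ℝ) ∂μ :=
        setIntegral_mono_on hint.integrableOn
          (integrableOn_const (measure_ne_top _ _))
          measurableSet_Ico (fun x hx => hx.2.le)
      rwa [setIntegral_const, smul_eq_mul] at h1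
    have hI2 : ∫ x in Ici w₂, x ∂μ = b * (μ (Ici w₂)).toReal := by
      rw [hbdef, div_mul_cancel₀ _ (ne_of_gt h₂)]
    have hmul : (μ (Ico w₁ w₂)).toReal * w₂ ≤ (μ (Ico w₁ w₂)).toReal * b :=
      mul_le_mul_of_nonneg_left hw2b ENNReal.toReal_nonneg
    have hrw : (μ (Ico w₁ w₂)).toReal * b + b * (μ (Ici w₂)).toReal
        = b * (μ (Ici w₁)).toReal := by
      rw [← hmass]; ring
    linarith [hsplit, hIco, hI2, hmul]
  · have hz : μ (Ici w₂) = 0 := by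
      have h0 : (μ (Ici w₂)).toReal = 0 :=
        le_antisymm (not_lt.1 h₂) ENNReal.toReal_nonneg
      exact (ENNReal.toReal_eq_zero_iff _).1 h0 |>.resolve_right (measure_ne_top _ _)
    have hae : ∀ᵐ x ∂μ, x ≤ w₂ := by
      rw [ae_iff]
      refine measure_mono_null (fun x hx => ?_) hz
      exact le_of_lt (not_le.1 hx)
    simp only [barycenter, if_neg h₂]
    split_ifs with h₁
    · rw [div_le_iff₀ h₁]
      have h1 : ∫ x in Ici w₁, x ∂μ ≤ ∫ _x in Ici w₁, (w₂ : ℝ) ∂μ :=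
        integral_mono_ae hint.integrableOn
          (integrableOn_const (measure_ne_top _ _))
          (ae_restrict_of_ae hae)
      rw [setIntegral_const, smul_eq_mul, measureReal_def] at h1
      linarith
    · exact h12

lemma bary_measurable (μ : Measure ℝ) [IsFiniteMeasure μ]
    (hint : Integrable (fun x : ℝ => x) μ) : Measurable (barycenter μ) := by
  have hm : Antitone (fun w : ℝ => (μ (Ici w)).toReal) := fun a b hab =>
    ENNReal.toReal_mono (measure_ne_top _ _) (measure_mono (Ici_subset_Ici.2 hab))
  have hgp : Antitone (fun w : ℝ => ∫ x in Ici w, max x 0 ∂μ) := by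
    intro a b hab
    exact setIntegral_mono_set hint.pos_part.integrableOn
      (ae_of_all _ fun x => le_max_right _ _)
      (HasSubset.Subset.eventuallyLE (Ici_subset_Ici.2 hab))
  have hgm : Antitone (fun w : ℝ => ∫ x in Ici w, max (-x) 0 ∂μ) := by
    intro a b hab
    exact setIntegral_mono_set hint.neg_part.integrableOn
      (ae_of_all _ fun x => le_max_right _ _)
      (HasSubset.Subset.eventuallyLE (Ici_subset_Ici.2 hab))
  have hI : (fun w : ℝ => ∫ x in Ici w, x ∂μ)
      = fun w => (∫ x in Ici w, max x 0 ∂μ) - ∫ x in Ici w, max (-x) 0 ∂μ := by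
    funext w
    rw [← integral_sub hint.pos_part.integrableOn hint.neg_part.integrableOn]
    congr 1
    funext x
    rcases le_total 0 x with h | h
    · rw [max_eq_left h, max_eq_right (neg_nonpos.2 h), sub_zero]
    · rw [max_eq_right h, max_eq_left (neg_nonneg.2 h), zero_sub, neg_neg]
  have hImeas : Measurable fun w : ℝ => ∫ x in Ici w, x ∂μ := by
    rw [hI]; exact hgp.measurable.sub hgm.measurable
  have hset : MeasurableSet {w : ℝ | 0 < (μ (Ici w)).toReal} :=
    hm.measurable measurableSet_Ioi
  exact Measurable.ite hset (hImeas.div hm.measurable) measurable_id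

/-- the Azéma–Yor tail bound for the running maximum. -/
theorem azemaYor_tail_bound (μ : Measure ℝ) [IsProbabilityMeasure μ] [NullSingletonClass μ]
    (hμ : Centred μ)
    (π : Measure (ℝ × ℝ)) [IsProbabilityMeasure π] (hπ : RogersAdmissible μ π)
    (l : ℝ) (hl : 0 < l) :
    π (univ ×ˢ Ici l) ≤ μ {x : ℝ | l ≤ barycenter μ x} ∧
      Measure.map (fun w : ℝ => (w, barycenter μ w)) μ (univ ×ˢ Ici l) =
        μ {x : ℝ | l ≤ barycenter μ x} := by
  obtain ⟨hint, hzero, hM, hcond, hmap⟩ := hπ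
  have hμint : Integrable (fun x : ℝ => x) μ := hμ.1
  constructor
  · have hSeq : univ ×ˢ Ici l = {p : ℝ × ℝ | l ≤ p.2} := by
      ext ⟨a, b⟩; simp [Set.mem_prod]
    rw [hSeq]
    set S : Set (ℝ × ℝ) := {p : ℝ × ℝ | l ≤ p.2} with hS
    set A : Set ℝ := {x | l ≤ barycenter μ x} with hA
    have hlA : l ∈ A := bary_ge_self μ hμint l
    by_cases hbdd : BddBelow A
    · set c := sInf A with hc
      have key : ∀ c' : ℝ, c' < c → π S ≤ μ (Ici c') := by
        intro c' hc'
        have hc'l : c' < l := lt_of_lt_of_le hc' (csInf_le hbdd hlA)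
        have hβ : barycenter μ c' < l := by
          by_contra hcon
          exact absurd (csInf_le hbdd (not_lt.1 hcon : l ≤ barycenter μ c')) (not_le.2 hc')
        have h1 : l * (π S).toReal ≤ ∫ p in S, p.1 ∂π := hcond l hl.le
        have hsub : Integrable (fun p : ℝ × ℝ => p.1 - c') π := hint.sub (integrable_const c')
        have hposint : Integrable (fun p : ℝ × ℝ => max (p.1 - c') 0) π := hsub.pos_part
        have h2 : ∫ p in S, (p.1 - c') ∂π = (∫ p in S, p.1 ∂π) - (π S).toReal * c' := by
          rw [integral_sub hint.integrableOn
            (integrableOn_const (measure_ne_top _ _)),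
            setIntegral_const, smul_eq_mul, measureReal_def]
        have h3 : ∫ p in S, (p.1 - c') ∂π ≤ ∫ p, max (p.1 - c') 0 ∂π :=
          calc ∫ p in S, (p.1 - c') ∂π ≤ ∫ p in S, max (p.1 - c') 0 ∂π :=
                integral_mono hsub.integrableOn hposint.integrableOn
                  (fun p => le_max_left _ _)
            _ ≤ ∫ p, max (p.1 - c') 0 ∂π :=
                setIntegral_le_integral hposint (ae_of_all _ fun p => le_max_right _ _)
        have h4 : ∫ p : ℝ × ℝ, max (p.1 - c') 0 ∂π = ∫ x, max (x - c') 0 ∂μ := by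
          rw [← hmap, integral_map measurable_fst.aemeasurable
            (Measurable.aestronglyMeasurable
              (by fun_prop : Measurable fun x : ℝ => max (x - c') 0))]
        have h5 : ∫ x, max (x - c') 0 ∂μ = ∫ x in Ici c', (x - c') ∂μ := by
          rw [← integral_indicator measurableSet_Ici]
          congr 1
          funext x
          rw [Set.indicator_apply]
          split_ifs with hx
          · exact max_eq_left (sub_nonneg.2 hx)
          · exact max_eq_right (sub_nonpos.2 (le_of_not_ge hx))
        by_cases hm' : 0 < (μ (Ici c')).toReal
        · have h6 : ∫ x in Ici c', x ∂μ = barycenter μ c' * (μ (Ici c')).toReal := by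
            rw [barycenter, if_pos hm', div_mul_cancel₀ _ (ne_of_gt hm')]
          have h7 : ∫ x in Ici c', (x - c') ∂μ
              = (∫ x in Ici c', x ∂μ) - (μ (Ici c')).toReal * c' := by
            rw [integral_sub hμint.integrableOn
              (integrableOn_const (measure_ne_top _ _)),
              setIntegral_const, smul_eq_mul, measureReal_def]
          have hmul : barycenter μ c' * (μ (Ici c')).toReal
              ≤ l * (μ (Ici c')).toReal :=
            mul_le_mul_of_nonneg_right hβ.le ENNReal.toReal_nonneg
          have hkey : (l - c') * (π S).toReal ≤ (l - c') * (μ (Ici c')).toReal := by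
            linarith
          have htR : (π S).toReal ≤ (μ (Ici c')).toReal :=
            le_of_mul_le_mul_left hkey (sub_pos.2 hc'l)
          exact (ENNReal.toReal_le_toReal (measure_ne_top _ _) (measure_ne_top _ _)).1 htR
        · have hz : μ (Ici c') = 0 := by
            have h0 : (μ (Ici c')).toReal = 0 :=
              le_antisymm (not_lt.1 hm') ENNReal.toReal_nonneg
            exact (ENNReal.toReal_eq_zero_iff _).1 h0 |>.resolve_right (measure_ne_top _ _)
          have hres : ∫ x in Ici c', (x - c') ∂μ = 0 := by
            rw [Measure.restrict_eq_zero.2 hz, integral_zero_measure]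
          have hπS0 : (π S).toReal = 0 := by nlinarith [ENNReal.toReal_nonneg (a := π S)]
          have : π S = 0 :=
            (ENNReal.toReal_eq_zero_iff _).1 hπS0 |>.resolve_right (measure_ne_top _ _)
          rw [this]; exact zero_le
      have hlim : π S ≤ μ (Ici c) := by
        have hseq : ∀ n : ℕ, π S ≤ μ (Ici (c - 1 / (n + 1))) := fun n =>
          key _ (sub_lt_self c (by positivity))
        have hanti : Antitone fun n : ℕ => Ici (c - 1 / (n + 1 : ℝ)) := by
          intro n m hnm
          apply Ici_subset_Ici.2
          have : (1 : ℝ) / (m + 1) ≤ 1 / (n + 1) := by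
            apply one_div_le_one_div_of_le (by positivity)
            exact_mod_cast add_le_add_left (Nat.cast_le.2 hnm) 1
          linarith
        have hInter : ⋂ n : ℕ, Ici (c - 1 / (n + 1 : ℝ)) = Ici c := by
          ext x
          simp only [mem_iInter, mem_Ici]
          constructor
          · intro h
            by_contra hx
            push_neg at hx
            obtain ⟨n, hn⟩ := exists_nat_one_div_lt (sub_pos.2 hx)
            have := h n
            linarith
          · intro h n
            have h0 : (0 : ℝ) < 1 / (n + 1) := by positivity
            linarith
        have ht : Filter.Tendsto (fun n : ℕ => μ (Ici (c - 1 / (n + 1))))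
            Filter.atTop (nhds (μ (Ici c))) := by
          have := tendsto_measure_iInter_atTop (μ := μ)
            (s := fun n : ℕ => Ici (c - 1 / (n + 1 : ℝ)))
            (fun n => measurableSet_Ici.nullMeasurableSet) hanti ⟨0, measure_ne_top _ _⟩
          rwa [hInter] at this
        exact ge_of_tendsto ht (Filter.Eventually.of_forall hseq)
      have hsub2 : Ioi c ⊆ A := by
        intro x hx
        obtain ⟨a, haA, hax⟩ := exists_lt_of_csInf_lt ⟨l, hlA⟩ hx
        exact le_trans haA (bary_mono μ hμint hax.le)
      calc π S ≤ μ (Ici c) := hlim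
        _ = μ (Ioi c) := (measure_congr Ioi_ae_eq_Ici).symm
        _ ≤ μ A := measure_mono hsub2
    · have hAuniv : A = univ := by
        apply eq_univ_of_forall
        intro x
        have : ∃ w ∈ A, w < x := by
          by_contra h
          push_neg at h
          exact hbdd ⟨x, fun w hw => h w hw⟩
        obtain ⟨w, hwA, hwx⟩ := this
        exact le_trans hwA (bary_mono μ hμint hwx.le)
      rw [hAuniv, measure_univ]
      exact prob_le_one
  · have hφ : Measurable fun w : ℝ => (w, barycenter μ w) :=
      measurable_id.prodMk (bary_measurable μ hμint)
    rw [Measure.map_apply hφ (MeasurableSet.univ.prod measurableSet_Ici)]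
    congr 1
    ext x
    simp [Set.mem_prod]
end
end
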